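/- arXiv:1812.07279 — 8 statements merged into one kernel-verified Lean document; each statement's English description precedes it below -/
import Mathlib

section
/- If all n masses are equal (each equal to M/n, M = Σ_i m_i) and q is a normalized central configuration with |q_i| ≤ R for all i, then R^3 ≥ (n−1) M / (4n). -/
open Finset RealInnerProductSpace

theorem centralConfig_equal_masses_size_lower_bound
    (n d : ℕ) (hn : 2 ≤ n)
    (q : Fin n → EuclideanSpace ℝ (Fin d)) (m : Fin n → ℝ) (M R : ℝ)
    (hM : 0 < M)
    (hmeq : ∀ i, m i = M / n)
    (hq : ∀ i j, i ≠ j → q i ≠ q j)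
    (hcc : ∀ i, q i = ∑ j ∈ Finset.univ \ {i},
      (m j / ‖q i - q j‖ ^ 3) • (q i - q j))
    (hR : ∀ i, ‖q i‖ ≤ R) :
    R ^ 3 ≥ ((n : ℝ) - 1) * M / (4 * n) := by
  have hn0 : (0:ℝ) < n := by
    have : (2:ℝ) ≤ n := by exact_mod_cast hn
    linarith
  set c : ℝ := M / n with hc
  have hcpos : 0 < c := div_pos hM hn0
  -- R > 0
  have hi01 : (⟨0, by omega⟩ : Fin n) ≠ ⟨1, by omega⟩ := by simp [Fin.ext_iff]
  have hRpos : 0 < R := by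
    by_contra h
    push_neg at h
    have h0 : q ⟨0, by omega⟩ = 0 := by
      have := hR ⟨0, by omega⟩; have : ‖q ⟨0, by omega⟩‖ ≤ 0 := le_trans this h
      simpa using le_antisymm this (norm_nonneg _)
    have h1 : q ⟨1, by omega⟩ = 0 := by
      have := hR ⟨1, by omega⟩; have : ‖q ⟨1, by omega⟩‖ ≤ 0 := le_trans this h
      simpa using le_antisymm this (norm_nonneg _)
    exact hq _ _ hi01 (h0.trans h1.symm)
  -- positive distances
  have hrpos : ∀ i j : Fin n, i ≠ j → 0 < ‖q i - q j‖ := by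
    intro i j hij
    rw [norm_pos_iff, sub_ne_zero]
    exact hq i j hij
  have hrle : ∀ i j : Fin n, ‖q i - q j‖ ≤ 2 * R := by
    intro i j
    calc ‖q i - q j‖ ≤ ‖q i‖ + ‖q j‖ := norm_sub_le _ _
    _ ≤ 2 * R := by have := hR i; have := hR j; linarith
  -- key identity per i
  have key : ∀ i, ‖q i‖ ^ 2
      = ∑ j ∈ univ \ {i}, (c / ‖q i - q j‖ ^ 3) * ⟪q i, q i - q j⟫ := by
    intro i
    calc ‖q i‖ ^ 2 = ⟪q i, q i⟫ := (real_inner_self_eq_norm_sq _).symm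
    _ = ⟪q i, ∑ j ∈ univ \ {i}, (m j / ‖q i - q j‖ ^ 3) • (q i - q j)⟫ := by
        rw [← hcc i]
    _ = ∑ j ∈ univ \ {i}, (c / ‖q i - q j‖ ^ 3) * ⟪q i, q i - q j⟫ := by
        rw [inner_sum]
        exact Finset.sum_congr rfl fun j _ => by
          rw [real_inner_smul_right, hmeq j]
  -- symmetrized sum
  have hsum : 2 * ∑ i, ‖q i‖ ^ 2 = ∑ i, ∑ j ∈ univ \ {i}, c / ‖q i - q j‖ := by
    have swap : (∑ i, ∑ j ∈ univ \ {i}, (c / ‖q i - q j‖ ^ 3) * ⟪q i, q i - q j⟫)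
        = ∑ i, ∑ j ∈ univ \ {i}, (c / ‖q j - q i‖ ^ 3) * ⟪q j, q j - q i⟫ := by
      apply Finset.sum_comm' (s := univ) (t := fun i => univ \ {i})
        (t' := univ) (s' := fun j => univ \ {j})
      intro i j
      simp [mem_sdiff, ne_comm, eq_comm, and_comm]
    calc 2 * ∑ i, ‖q i‖ ^ 2
        = (∑ i, ∑ j ∈ univ \ {i}, (c / ‖q i - q j‖ ^ 3) * ⟪q i, q i - q j⟫)
          + ∑ i, ∑ j ∈ univ \ {i}, (c / ‖q j - q i‖ ^ 3) * ⟪q j, q j - q i⟫ := by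
          rw [← swap]
          simp only [← key]
          ring
    _ = ∑ i, ∑ j ∈ univ \ {i}, c / ‖q i - q j‖ := by
          rw [← Finset.sum_add_distrib]
          apply Finset.sum_congr rfl
          intro i _
          rw [← Finset.sum_add_distrib]
          apply Finset.sum_congr rfl
          intro j hj
          have hij : i ≠ j := by
            rw [mem_sdiff, mem_singleton] at hj
            exact fun h => hj.2 h.symm
          have hr : 0 < ‖q i - q j‖ := hrpos i j hij
          have hrev : ‖q j - q i‖ = ‖q i - q j‖ := norm_sub_rev _ _
          have hinner : ⟪q i, q i - q j⟫ + ⟪q j, q j - q i⟫ = ‖q i - q j‖ ^ 2 := by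
            rw [show q j - q i = -(q i - q j) from by abel, inner_neg_right,
              ← sub_eq_add_neg, ← inner_sub_left, real_inner_self_eq_norm_sq]
          rw [hrev, ← mul_add, hinner]
          field_simp
  -- lower bound on the pairwise sum
  have hlow : (n : ℝ) * (((n : ℝ) - 1) * (c / (2 * R)))
      ≤ ∑ i, ∑ j ∈ univ \ {i}, c / ‖q i - q j‖ := by
    have : ∀ i : Fin n, ((n : ℝ) - 1) * (c / (2 * R))
        ≤ ∑ j ∈ univ \ {i}, c / ‖q i - q j‖ := by
      intro i
      have hcard : ((univ \ {i} : Finset (Fin n)).card : ℝ) = (n : ℝ) - 1 := by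
        rw [Finset.card_sdiff_of_subset (by simp)]
        simp
        rw [Nat.cast_sub (by omega)]
        simp
      calc ((n : ℝ) - 1) * (c / (2 * R))
          = ∑ _j ∈ univ \ {i}, c / (2 * R) := by
            rw [Finset.sum_const, nsmul_eq_mul, hcard]
      _ ≤ ∑ j ∈ univ \ {i}, c / ‖q i - q j‖ := by
            apply Finset.sum_le_sum
            intro j hj
            have hij : i ≠ j := by
              rw [mem_sdiff, mem_singleton] at hj
              exact fun h => hj.2 h.symm
            exact div_le_div_of_nonneg_left hcpos.le (hrpos i j hij) (hrle i j)
    calc (n : ℝ) * (((n : ℝ) - 1) * (c / (2 * R)))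
        = ∑ _i : Fin n, ((n : ℝ) - 1) * (c / (2 * R)) := by
          rw [Finset.sum_const, nsmul_eq_mul, Finset.card_univ, Fintype.card_fin]
    _ ≤ _ := Finset.sum_le_sum fun i _ => this i
  -- upper bound on the norm sum
  have hupp : ∑ i, ‖q i‖ ^ 2 ≤ (n : ℝ) * R ^ 2 := by
    calc ∑ i, ‖q i‖ ^ 2 ≤ ∑ _i : Fin n, R ^ 2 :=
          Finset.sum_le_sum fun i _ => pow_le_pow_left₀ (norm_nonneg _) (hR i) 2
    _ = (n : ℝ) * R ^ 2 := by
          rw [Finset.sum_const, nsmul_eq_mul, Finset.card_univ, Fintype.card_fin]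
  have hmain : (n : ℝ) * (((n : ℝ) - 1) * (c / (2 * R))) ≤ 2 * ((n : ℝ) * R ^ 2) := by
    calc (n : ℝ) * (((n : ℝ) - 1) * (c / (2 * R)))
        ≤ ∑ i, ∑ j ∈ univ \ {i}, c / ‖q i - q j‖ := hlow
    _ = 2 * ∑ i, ‖q i‖ ^ 2 := hsum.symm
    _ ≤ 2 * ((n : ℝ) * R ^ 2) := by linarith
  -- final arithmetic
  rw [ge_iff_le, div_le_iff₀ (by positivity)]
  have h2 : (2:ℝ) ≤ n := by exact_mod_cast hn
  have hc' : c * n = M := by rw [hc, div_mul_cancel₀ M hn0.ne']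
  have hmain' : (n : ℝ) * (((n : ℝ) - 1) * c) ≤ 2 * ((n : ℝ) * R ^ 2) * (2 * R) := by
    have := mul_le_mul_of_nonneg_right hmain (by positivity : (0:ℝ) ≤ 2 * R)
    calc (n : ℝ) * (((n : ℝ) - 1) * c)
        = (n : ℝ) * (((n : ℝ) - 1) * (c / (2 * R))) * (2 * R) := by
          field_simp
    _ ≤ 2 * ((n : ℝ) * R ^ 2) * (2 * R) := this
  nlinarith [hmain', hc', hRpos, hn0]
end

section
/- If the total mass is M = 1 and q is a normalized central configuration with n ≥ 2 bodies, then there exists a pair i ≠ j with r_{ij} ≥ 1. -/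
open Finset RealInnerProductSpace

theorem centralConfig_exists_distance_ge_one
    (n d : ℕ) (hn : 2 ≤ n)
    (q : Fin n → EuclideanSpace ℝ (Fin d)) (m : Fin n → ℝ)
    (hm : ∀ i, 0 < m i)
    (hM : ∑ i, m i = 1)
    (hq : ∀ i j, i ≠ j → q i ≠ q j)
    (hcc : ∀ i, q i = ∑ j ∈ Finset.univ \ {i},
      (m j / ‖q i - q j‖ ^ 3) • (q i - q j)) :
    ∃ i j : Fin n, i ≠ j ∧ 1 ≤ ‖q i - q j‖ := by
  by_contra hcon
  push_neg at hcon
  set g : Fin n → Fin n → EuclideanSpace ℝ (Fin d) :=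
    fun i j => (m i * (m j / ‖q i - q j‖ ^ 3)) • (q i - q j) with hgdef
  have hganti : ∀ i j, g i j = -(g j i) := by
    intro i j
    simp only [hgdef]
    rw [norm_sub_rev, ← smul_neg, neg_sub]
    ring_nf
  -- center of mass is zero
  have hcm : ∑ i, m i • q i = 0 := by
    have h1 : ∑ i, m i • q i = ∑ i, ∑ j, g i j := by
      refine Finset.sum_congr rfl fun i _ => ?_
      rw [hcc i, Finset.smul_sum]
      rw [← Finset.sum_subset (Finset.sdiff_subset : Finset.univ \ {i} ⊆ Finset.univ)]
      · refine Finset.sum_congr rfl fun j _ => ?_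
        rw [hgdef, smul_smul]
      · intro j _ hj
        simp only [Finset.mem_sdiff, Finset.mem_univ, Finset.mem_singleton, true_and,
          not_not] at hj
        subst hj
        simp [hgdef]
    have h2 : ∑ i, ∑ j, g i j = -(∑ i, ∑ j, g i j) := by
      conv_lhs => rw [Finset.sum_comm]
      rw [← Finset.sum_neg_distrib]
      refine Finset.sum_congr rfl fun i _ => ?_
      rw [← Finset.sum_neg_distrib]
      exact Finset.sum_congr rfl fun j _ => hganti j i
    have h3 : (2 : ℝ) • (∑ i, ∑ j, g i j) = 0 := by
      rw [two_smul]
      nth_rewrite 2 [h2]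
      simp
    rw [h1]
    rcases smul_eq_zero.mp h3 with h | h
    · norm_num at h
    · exact h
  -- pick maximizer of norm
  obtain ⟨i, -, hi⟩ := Finset.exists_max_image (Finset.univ : Finset (Fin n))
    (fun i => ‖q i‖) ⟨⟨0, by omega⟩, Finset.mem_univ _⟩
  have hine : (⟨0, by omega⟩ : Fin n) ≠ ⟨1, by omega⟩ := by
    intro h; simpa using congrArg Fin.val h
  have hqi : q i ≠ 0 := by
    intro h0
    have hall : ∀ j, q j = 0 := by
      intro j
      have := hi j (Finset.mem_univ j)
      rw [h0] at this
      simp only [norm_zero] at this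
      exact norm_le_zero_iff.mp this
    exact hq _ _ hine (by rw [hall, hall])
  have hqi2 : (0:ℝ) < ‖q i‖ ^ 2 := pow_pos (norm_pos_iff.mpr hqi) 2
  -- key quantities
  set t : Fin n → ℝ := fun j => ⟪q i, q i - q j⟫ with htdef
  have ht0 : ∀ j, 0 ≤ t j := by
    intro j
    have : ⟪q i, q j⟫ ≤ ‖q i‖ * ‖q j‖ := real_inner_le_norm _ _
    have h2 : ‖q j‖ ≤ ‖q i‖ := hi j (Finset.mem_univ j)
    have : ⟪q i, q j⟫ ≤ ‖q i‖ * ‖q i‖ :=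
      this.trans (by nlinarith [norm_nonneg (q i)])
    simp only [htdef, inner_sub_right, real_inner_self_eq_norm_sq]
    nlinarith
  -- sum of m_j * t_j over j ≠ i equals ‖q i‖^2
  have hsum_m : ∑ j ∈ Finset.univ \ {i}, m j * t j = ‖q i‖ ^ 2 := by
    have e1 : ∑ j ∈ Finset.univ \ {i}, m j * t j = ∑ j, m j * t j := by
      refine Finset.sum_subset Finset.sdiff_subset fun j _ hj => ?_
      simp only [Finset.mem_sdiff, Finset.mem_univ, Finset.mem_singleton, true_and,
        not_not] at hj
      subst hj
      simp [htdef]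
    rw [e1]
    have e2 : ∀ j, m j * t j = m j * ‖q i‖ ^ 2 - ⟪q i, m j • q j⟫ := by
      intro j
      simp only [htdef, inner_sub_right, real_inner_self_eq_norm_sq, real_inner_smul_right]
      ring
    simp_rw [e2]
    rw [Finset.sum_sub_distrib, ← Finset.sum_mul, hM, ← inner_sum, hcm, inner_zero_right]
    ring
  -- sum of c_j * t_j equals ‖q i‖^2 too
  have hsum_c : ∑ j ∈ Finset.univ \ {i}, (m j / ‖q i - q j‖ ^ 3) * t j = ‖q i‖ ^ 2 := by
    have key := congrArg (fun v => (⟪q i, v⟫ : ℝ)) (hcc i)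
    rw [← real_inner_self_eq_norm_sq, key, inner_sum]
    exact Finset.sum_congr rfl fun j _ => by rw [real_inner_smul_right]
  -- exists j with positive term
  have hexpos : ∃ j ∈ Finset.univ \ {i}, 0 < m j * t j := by
    by_contra hneg
    push_neg at hneg
    have : ∑ j ∈ Finset.univ \ {i}, m j * t j ≤ 0 :=
      Finset.sum_nonpos hneg
    rw [hsum_m] at this
    linarith
  obtain ⟨j0, hj0mem, hj0pos⟩ := hexpos
  -- strict inequality: m j < c j on positive terms
  have hc : ∀ j ∈ Finset.univ \ {i}, m j ≤ m j / ‖q i - q j‖ ^ 3 := by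
    intro j hj
    simp only [Finset.mem_sdiff, Finset.mem_univ, Finset.mem_singleton, true_and] at hj
    have hne : q i ≠ q j := hq i j (by exact fun h => hj (h ▸ rfl))
    have hr : 0 < ‖q i - q j‖ := by
      rw [norm_pos_iff]; exact sub_ne_zero.mpr hne
    have hr1 : ‖q i - q j‖ < 1 := hcon i j (fun h => hj (h ▸ rfl))
    have hr3 : ‖q i - q j‖ ^ 3 < 1 := pow_lt_one₀ hr.le hr1 (by norm_num)
    have hr3p : 0 < ‖q i - q j‖ ^ 3 := by positivity
    rw [le_div_iff₀ hr3p]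
    nlinarith [(hm j).le]
  have hlt : ∑ j ∈ Finset.univ \ {i}, m j * t j
      < ∑ j ∈ Finset.univ \ {i}, (m j / ‖q i - q j‖ ^ 3) * t j := by
    refine Finset.sum_lt_sum (fun j hj => mul_le_mul_of_nonneg_right (hc j hj) (ht0 j))
      ⟨j0, hj0mem, ?_⟩
    have htj0 : 0 < t j0 := by
      rcases lt_or_ge 0 (t j0) with h | h
      · exact h
      · exfalso; nlinarith [(hm j0).le, mul_nonneg (hm j0).le (ht0 j0)]
    simp only [Finset.mem_sdiff, Finset.mem_univ, Finset.mem_singleton, true_and] at hj0mem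
    have hne : q i ≠ q j0 := hq i j0 (fun h => hj0mem (h ▸ rfl))
    have hr : 0 < ‖q i - q j0‖ := by rw [norm_pos_iff]; exact sub_ne_zero.mpr hne
    have hr1 : ‖q i - q j0‖ < 1 := hcon i j0 (fun h => hj0mem (h ▸ rfl))
    have hr3 : ‖q i - q j0‖ ^ 3 < 1 := pow_lt_one₀ hr.le hr1 (by norm_num)
    have hr3p : 0 < ‖q i - q j0‖ ^ 3 := by positivity
    have : m j0 < m j0 / ‖q i - q j0‖ ^ 3 := by
      rw [lt_div_iff₀ hr3p]; nlinarith [hm j0]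
    exact mul_lt_mul_of_pos_right this htj0
  rw [hsum_m, hsum_c] at hlt
  exact lt_irrefl _ hlt
end

section
/- If the total mass is M = 1, q is a normalized central configuration with n ≥ 2 bodies, and |q_i| ≤ R for all i, then R ≥ 1/2. -/
open Finset
open scoped RealInnerProductSpace

theorem centralConfig_size_lower_bound
    (n d : ℕ) (hn : 2 ≤ n)
    (q : Fin n → EuclideanSpace ℝ (Fin d)) (m : Fin n → ℝ) (R : ℝ)
    (hm : ∀ i, 0 < m i)
    (hM : ∑ i, m i = 1)
    (hq : ∀ i j, i ≠ j → q i ≠ q j)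
    (hcc : ∀ i, q i = ∑ j ∈ Finset.univ \ {i},
      (m j / ‖q i - q j‖ ^ 3) • (q i - q j))
    (hR : ∀ i, ‖q i‖ ≤ R) :
    1 / 2 ≤ R := by
  by_contra hcon
  push_neg at hcon
  have hrpos : ∀ i j : Fin n, i ≠ j → 0 < ‖q i - q j‖ := fun i j hij => by
    rw [norm_pos_iff, sub_ne_zero]; exact hq i j hij
  have hrlt : ∀ i j : Fin n, ‖q i - q j‖ < 1 := fun i j => by
    calc ‖q i - q j‖ ≤ ‖q i‖ + ‖q j‖ := norm_sub_le _ _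
    _ < 1 := by have h1 := hR i; have h2 := hR j; linarith
  -- full-sum version of hcc (diagonal term is zero)
  have hcc' : ∀ i, q i = ∑ j, (m j / ‖q i - q j‖ ^ 3) • (q i - q j) := by
    intro i
    have hsum : (∑ j ∈ Finset.univ \ {i}, (m j / ‖q i - q j‖ ^ 3) • (q i - q j))
        = ∑ j, (m j / ‖q i - q j‖ ^ 3) • (q i - q j) := by
      rw [← Finset.erase_eq]
      exact Finset.sum_erase _ (by simp)
    rw [← hsum]
    exact hcc i
  set I : ℝ := ∑ i, m i * ‖q i‖ ^ 2 with hI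
  -- Step A : 2 * I = ∑ i ∑ j, m i * m j / ‖q i - q j‖
  have h1 : I = ∑ i, ∑ j, (m i * m j / ‖q i - q j‖ ^ 3) * ⟪q i, q i - q j⟫ := by
    rw [hI]
    congr 1
    funext i
    have e1 : (⟪q i, q i⟫ : ℝ)
        = ⟪q i, ∑ j, (m j / ‖q i - q j‖ ^ 3) • (q i - q j)⟫ :=
      congrArg (fun v => (⟪q i, v⟫ : ℝ)) (hcc' i)
    have e2 : (‖q i‖ : ℝ) ^ 2 = ⟪q i, q i⟫ := (real_inner_self_eq_norm_sq _).symm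
    rw [e2, e1, inner_sum, Finset.mul_sum]
    congr 1
    funext j
    rw [real_inner_smul_right]
    ring
  have stepA : 2 * I = ∑ i, ∑ j, m i * m j / ‖q i - q j‖ := by
    have h2 : (∑ i, ∑ j, (m i * m j / ‖q i - q j‖ ^ 3) * ⟪q i, q i - q j⟫)
        = ∑ i, ∑ j, (m j * m i / ‖q j - q i‖ ^ 3) * ⟪q j, q j - q i⟫ :=
      Finset.sum_comm
    have h3 : ∀ i j : Fin n,
        (m i * m j / ‖q i - q j‖ ^ 3) * ⟪q i, q i - q j⟫
        + (m j * m i / ‖q j - q i‖ ^ 3) * ⟪q j, q j - q i⟫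
        = m i * m j / ‖q i - q j‖ := by
      intro i j
      rcases eq_or_ne i j with rfl | hij
      · simp
      · have hr := hrpos i j hij
        have hrev : ‖q j - q i‖ = ‖q i - q j‖ := norm_sub_rev _ _
        have key : (⟪q i, q i - q j⟫ : ℝ) + ⟪q j, q j - q i⟫ = ‖q i - q j‖ ^ 2 := by
          rw [← real_inner_self_eq_norm_sq]
          simp only [inner_sub_left, inner_sub_right]
          rw [real_inner_comm (q j) (q i)]
          ring
        set a : ℝ := (⟪q i, q i - q j⟫ : ℝ) with ha
        set b : ℝ := (⟪q j, q j - q i⟫ : ℝ) with hb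
        set s : ℝ := ‖q i - q j‖ with hs
        rw [hrev]
        have hcomb : m i * m j / s ^ 3 * a + m j * m i / s ^ 3 * b
            = m i * m j * (a + b) / s ^ 3 := by ring
        rw [hcomb, key]
        rw [show s ^ 3 = s ^ 2 * s by ring]
        rw [mul_div_assoc]
        rw [show s ^ 2 / (s ^ 2 * s) = 1 / s by
          field_simp]
        field_simp
    rw [two_mul, h1]
    nth_rewrite 2 [h2]
    rw [← Finset.sum_add_distrib]
    simp_rw [← Finset.sum_add_distrib]
    simp_rw [h3]
  -- center of mass is zero
  have hc : (∑ i, m i • q i) = 0 := by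
    have h1' : (∑ i, m i • q i) = ∑ i, ∑ j, (m i * m j / ‖q i - q j‖ ^ 3) • (q i - q j) := by
      congr 1; funext i
      have e1 := congrArg (fun v => m i • v) (hcc' i)
      rw [e1, Finset.smul_sum]
      congr 1; funext j
      rw [smul_smul]
      congr 1
      ring
    have h2' : (∑ i, ∑ j, (m i * m j / ‖q i - q j‖ ^ 3) • (q i - q j))
        = ∑ i, ∑ j, (m j * m i / ‖q j - q i‖ ^ 3) • (q j - q i) := Finset.sum_comm
    have h3' : ∀ i j : Fin n, (m j * m i / ‖q j - q i‖ ^ 3) • (q j - q i)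
        = - ((m i * m j / ‖q i - q j‖ ^ 3) • (q i - q j)) := by
      intro i j
      rw [norm_sub_rev, ← smul_neg, neg_sub]
      congr 1
      ring
    have h4 : (∑ i, ∑ j, (m i * m j / ‖q i - q j‖ ^ 3) • (q i - q j))
        = - ∑ i, ∑ j, (m i * m j / ‖q i - q j‖ ^ 3) • (q i - q j) := by
      conv_lhs => rw [h2']
      calc (∑ i, ∑ j, (m j * m i / ‖q j - q i‖ ^ 3) • (q j - q i))
          = ∑ i, ∑ j, - ((m i * m j / ‖q i - q j‖ ^ 3) • (q i - q j)) :=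
            Finset.sum_congr rfl fun i _ => Finset.sum_congr rfl fun j _ => h3' i j
        _ = - ∑ i, ∑ j, (m i * m j / ‖q i - q j‖ ^ 3) • (q i - q j) := by
            simp
    have h6 : ((2 : ℝ) • ∑ i, ∑ j, (m i * m j / ‖q i - q j‖ ^ 3) • (q i - q j)) = 0 := by
      rw [two_smul]
      nth_rewrite 2 [h4]
      simp
    rw [h1']
    rcases smul_eq_zero.mp h6 with h | h
    · norm_num at h
    · exact h
  -- Step B : 2 * I = ∑ i ∑ j, m i * m j * ‖q i - q j‖ ^ 2
  have hP : (∑ i, ∑ j, m i * m j * ⟪q i, q j⟫) = 0 := by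
    have : (⟪∑ i, m i • q i, ∑ j, m j • q j⟫ : ℝ) = ∑ i, ∑ j, m i * m j * ⟪q i, q j⟫ := by
      rw [sum_inner]
      congr 1; funext i
      rw [real_inner_smul_left, inner_sum, Finset.mul_sum]
      congr 1; funext j
      rw [real_inner_smul_right]
      ring
    rw [← this, hc, inner_zero_left]
  have stepB : 2 * I = ∑ i, ∑ j, m i * m j * ‖q i - q j‖ ^ 2 := by
    have expand : ∀ i j : Fin n, m i * m j * ‖q i - q j‖ ^ 2
        = m i * m j * ‖q i‖ ^ 2 + m i * m j * ‖q j‖ ^ 2 - 2 * (m i * m j * ⟪q i, q j⟫) := by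
      intro i j
      have := norm_sub_sq_real (q i) (q j)
      rw [this]
      ring
    have e1 : (∑ i, ∑ j, m i * m j * ‖q i‖ ^ 2) = I := by
      rw [hI]
      refine Finset.sum_congr rfl fun i _ => ?_
      have h' : (∑ j, m i * m j * ‖q i‖ ^ 2) = (m i * ‖q i‖ ^ 2) * ∑ j, m j := by
        rw [Finset.mul_sum]
        exact Finset.sum_congr rfl fun j _ => by ring
      rw [h', hM, mul_one]
    have e2 : (∑ i, ∑ j, m i * m j * ‖q j‖ ^ 2) = I := by
      rw [Finset.sum_comm, ← e1]
      exact Finset.sum_congr rfl fun i _ => Finset.sum_congr rfl fun j _ => by ring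
    have e3 : (∑ i, ∑ j, 2 * (m i * m j * ⟪q i, q j⟫)) = 0 := by
      simp_rw [← Finset.mul_sum]
      rw [hP, mul_zero]
    simp_rw [expand, Finset.sum_sub_distrib, Finset.sum_add_distrib]
    rw [e1, e2, e3]
    ring
  -- conclusion: compare the two expressions for 2 * I
  have hzero : (∑ i, ∑ j, (m i * m j / ‖q i - q j‖ - m i * m j * ‖q i - q j‖ ^ 2)) = 0 := by
    simp_rw [Finset.sum_sub_distrib]
    rw [← stepA, ← stepB]
    ring
  have hterm_pos : ∀ i j : Fin n, i ≠ j →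
      0 < m i * m j / ‖q i - q j‖ - m i * m j * ‖q i - q j‖ ^ 2 := by
    intro i j hij
    have hr := hrpos i j hij
    have hlt := hrlt i j
    have hmm : 0 < m i * m j := mul_pos (hm i) (hm j)
    have h1' : m i * m j ≤ m i * m j / ‖q i - q j‖ := by
      rw [le_div_iff₀ hr]
      nlinarith
    have hs1 : ‖q i - q j‖ ^ 2 < 1 := by nlinarith
    have h2' : m i * m j * ‖q i - q j‖ ^ 2 < m i * m j := by nlinarith [mul_pos hmm (show (0:ℝ) < 1 - ‖q i - q j‖ ^ 2 by linarith)]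
    linarith
  have hterm_nonneg : ∀ i j : Fin n,
      0 ≤ m i * m j / ‖q i - q j‖ - m i * m j * ‖q i - q j‖ ^ 2 := by
    intro i j
    rcases eq_or_ne i j with rfl | hij
    · simp
    · exact le_of_lt (hterm_pos i j hij)
  have hpos : 0 < ∑ i, ∑ j, (m i * m j / ‖q i - q j‖ - m i * m j * ‖q i - q j‖ ^ 2) := by
    apply Finset.sum_pos'
    · intro i _
      exact Finset.sum_nonneg fun j _ => hterm_nonneg i j
    · refine ⟨⟨0, by omega⟩, Finset.mem_univ _, ?_⟩
      apply Finset.sum_pos'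
      · intro j _
        exact hterm_nonneg _ j
      · exact ⟨⟨1, by omega⟩, Finset.mem_univ _,
          hterm_pos _ _ (by simp [Fin.ext_iff])⟩
  linarith [hzero, hpos]
end

section
/- Let q be a normalized central configuration in the plane with n bodies, let R = |q_{i0}| = max_i |q_i|, and let M = Σ_i m_i. Then for every ε ∈ (0, R/(n−1)) we have R − (n−2)ε < M / ε². -/
open Finset RealInnerProductSpace

private lemma cluster_identity {n : ℕ} (q : Fin n → EuclideanSpace ℝ (Fin 2)) (m : Fin n → ℝ)
    (hcc : ∀ i, q i = ∑ j ∈ Finset.univ \ {i},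
      (m j / ‖q i - q j‖ ^ 3) • (q i - q j))
    (C : Finset (Fin n)) :
    ∑ i ∈ C, m i • q i
      = ∑ i ∈ C, ∑ j ∈ Cᶜ, ((m i * m j) / ‖q i - q j‖ ^ 3) • (q i - q j) := by
  set F : Fin n → Fin n → EuclideanSpace ℝ (Fin 2) :=
    fun i j => ((m i * m j) / ‖q i - q j‖ ^ 3) • (q i - q j) with hF
  have hFanti : ∀ i j, F j i = - F i j := by
    intro i j
    simp only [hF]
    rw [norm_sub_rev (q j), mul_comm (m j), show q j - q i = -(q i - q j) by abel, smul_neg]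
  have hFdiag : ∀ i, F i i = 0 := by intro i; simp [hF]
  have hstep : ∀ i, m i • q i = (∑ j ∈ C, F i j) + ∑ j ∈ Cᶜ, F i j := by
    intro i
    have h1 : m i • q i = ∑ j ∈ Finset.univ \ {i}, F i j := by
      rw [hcc i, Finset.smul_sum]
      refine Finset.sum_congr rfl fun j hj => ?_
      simp only [hF, smul_smul, mul_div_assoc]
    have h2 : ∑ j ∈ Finset.univ \ {i}, F i j = ∑ j, F i j := by
      refine Finset.sum_subset (Finset.sdiff_subset) fun j _ hj => ?_
      have : j = i := by
        by_contra hji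
        exact hj (Finset.mem_sdiff.mpr ⟨Finset.mem_univ _, by simpa using hji⟩)
      rw [this, hFdiag]
    rw [h1, h2, ← Finset.sum_add_sum_compl C (F i)]
  have hzero : ∑ i ∈ C, ∑ j ∈ C, F i j = 0 := by
    have hneg : ∑ i ∈ C, ∑ j ∈ C, F i j = - ∑ i ∈ C, ∑ j ∈ C, F i j := by
      calc ∑ i ∈ C, ∑ j ∈ C, F i j = ∑ j ∈ C, ∑ i ∈ C, F i j := Finset.sum_comm
        _ = ∑ j ∈ C, ∑ i ∈ C, -(F j i) := by
            refine Finset.sum_congr rfl fun j _ => Finset.sum_congr rfl fun i _ => ?_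
            rw [← hFanti]
        _ = - ∑ i ∈ C, ∑ j ∈ C, F i j := by simp [Finset.sum_neg_distrib]
    have h2 : (2 : ℝ) • (∑ i ∈ C, ∑ j ∈ C, F i j) = 0 := by
      rw [two_smul]
      nth_rewrite 1 [hneg]
      simp
    rcases smul_eq_zero.mp h2 with h | h
    · norm_num at h
    · exact h
  calc ∑ i ∈ C, m i • q i = ∑ i ∈ C, ((∑ j ∈ C, F i j) + ∑ j ∈ Cᶜ, F i j) :=
        Finset.sum_congr rfl fun i _ => hstep i
    _ = (∑ i ∈ C, ∑ j ∈ C, F i j) + ∑ i ∈ C, ∑ j ∈ Cᶜ, F i j := Finset.sum_add_distrib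
    _ = ∑ i ∈ C, ∑ j ∈ Cᶜ, F i j := by rw [hzero, zero_add]

private lemma cc_cluster_bound
    (n : ℕ) (hn : 3 ≤ n)
    (q : Fin n → EuclideanSpace ℝ (Fin 2)) (m : Fin n → ℝ) (R : ℝ) (i0 : Fin n)
    (hm : ∀ i, 0 < m i)
    (hq : ∀ i j, i ≠ j → q i ≠ q j)
    (hcc : ∀ i, q i = ∑ j ∈ Finset.univ \ {i},
      (m j / ‖q i - q j‖ ^ 3) • (q i - q j))
    (hR : R = ‖q i0‖) (hR0 : 0 < R)
    (hmax : ∀ i, ‖q i‖ ≤ R)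
    (ε : ℝ) (hε : 0 < ε)
    (C : Finset (Fin n)) (hi0C : i0 ∈ C)
    (hnear : ∀ i ∈ C, ‖q i - q i0‖ ≤ ((n : ℝ) - 2) * ε)
    (hfar : ∀ i ∈ C, ∀ j ∉ C, ε ≤ ‖q i - q j‖) :
    R - ((n : ℝ) - 2) * ε < (∑ i, m i) / ε ^ 2 := by
  have hn2 : (1 : ℝ) ≤ (n : ℝ) - 2 := by
    have : (3 : ℝ) ≤ (n : ℝ) := by exact_mod_cast hn
    linarith
  set A := ∑ i ∈ C, m i with hA
  have hApos : 0 < A := Finset.sum_pos (fun i _ => hm i) ⟨i0, hi0C⟩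
  set M := ∑ i, m i with hM
  -- lower bound on inner products
  have hlow : ∀ i ∈ C, R * (R - ((n : ℝ) - 2) * ε) ≤ ⟪q i0, q i⟫ := by
    intro i hi
    have h1 : ⟪q i0, q i0 - q i⟫ ≤ R * (((n : ℝ) - 2) * ε) := by
      calc ⟪q i0, q i0 - q i⟫ ≤ ‖q i0‖ * ‖q i0 - q i‖ := real_inner_le_norm _ _
        _ ≤ R * (((n : ℝ) - 2) * ε) := by
            rw [← hR]
            have := hnear i hi
            rw [norm_sub_rev] at this
            exact mul_le_mul_of_nonneg_left this (le_of_lt hR0)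
    have h2 : ⟪q i0, q i⟫ = ⟪q i0, q i0⟫ - ⟪q i0, q i0 - q i⟫ := by
      rw [inner_sub_right]; ring
    have h3 : ⟪q i0, q i0⟫ = R * R := by
      rw [real_inner_self_eq_norm_mul_norm, hR]
    rw [h2, h3]; nlinarith
  -- the strict inequality on the left
  have hL : A * (R * (R - ((n : ℝ) - 2) * ε)) < ∑ i ∈ C, m i * ⟪q i0, q i⟫ := by
    rw [hA, Finset.sum_mul]
    refine Finset.sum_lt_sum (fun i hi => ?_) ⟨i0, hi0C, ?_⟩
    · exact mul_le_mul_of_nonneg_left (hlow i hi) (le_of_lt (hm i))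
    · have h3 : ⟪q i0, q i0⟫ = R * R := by
        rw [real_inner_self_eq_norm_mul_norm, hR]
      rw [h3]
      have : R * (R - ((n : ℝ) - 2) * ε) < R * R := by
        nlinarith [mul_pos hR0 (mul_pos (show (0:ℝ) < (n:ℝ)-2 by linarith) hε)]
      exact mul_lt_mul_of_pos_left this (hm i0)
  -- identity
  have hid : ∑ i ∈ C, m i * ⟪q i0, q i⟫
      = ∑ i ∈ C, ∑ j ∈ Cᶜ, ⟪q i0, ((m i * m j) / ‖q i - q j‖ ^ 3) • (q i - q j)⟫ := by
    have := cluster_identity q m hcc C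
    calc ∑ i ∈ C, m i * ⟪q i0, q i⟫ = ⟪q i0, ∑ i ∈ C, m i • q i⟫ := by
          rw [inner_sum]
          exact Finset.sum_congr rfl fun i _ => (real_inner_smul_right _ _ _).symm
      _ = ⟪q i0, ∑ i ∈ C, ∑ j ∈ Cᶜ, ((m i * m j) / ‖q i - q j‖ ^ 3) • (q i - q j)⟫ := by
          rw [this]
      _ = ∑ i ∈ C, ∑ j ∈ Cᶜ, ⟪q i0, ((m i * m j) / ‖q i - q j‖ ^ 3) • (q i - q j)⟫ := by
          rw [inner_sum]
          exact Finset.sum_congr rfl fun i _ => by rw [inner_sum]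
  -- upper bound each term
  have hup : ∀ i ∈ C, ∀ j ∈ Cᶜ,
      ⟪q i0, ((m i * m j) / ‖q i - q j‖ ^ 3) • (q i - q j)⟫ ≤ m i * m j * (R / ε ^ 2) := by
    intro i hi j hj
    have hjC : j ∉ C := Finset.mem_compl.mp hj
    have hrε : ε ≤ ‖q i - q j‖ := hfar i hi j hjC
    have hrpos : 0 < ‖q i - q j‖ := lt_of_lt_of_le hε hrε
    set r := ‖q i - q j‖ with hr
    have hcs : ⟪q i0, q i - q j⟫ ≤ R * r := by
      calc ⟪q i0, q i - q j⟫ ≤ ‖q i0‖ * ‖q i - q j‖ := real_inner_le_norm _ _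
        _ = R * r := by rw [← hR]
    have hcpos : 0 ≤ (m i * m j) / r ^ 3 :=
      div_nonneg (le_of_lt (mul_pos (hm i) (hm j))) (by positivity)
    rw [real_inner_smul_right]
    calc (m i * m j) / r ^ 3 * ⟪q i0, q i - q j⟫
        ≤ (m i * m j) / r ^ 3 * (R * r) := mul_le_mul_of_nonneg_left hcs hcpos
      _ = m i * m j * (R / r ^ 2) := by field_simp
      _ ≤ m i * m j * (R / ε ^ 2) := by
          have h1 : R / r ^ 2 ≤ R / ε ^ 2 := by gcongr
          exact mul_le_mul_of_nonneg_left h1 (le_of_lt (mul_pos (hm i) (hm j)))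
  -- upper bound the double sum
  have hU : ∑ i ∈ C, ∑ j ∈ Cᶜ, ⟪q i0, ((m i * m j) / ‖q i - q j‖ ^ 3) • (q i - q j)⟫
      ≤ A * (M * (R / ε ^ 2)) := by
    have h1 : ∑ i ∈ C, ∑ j ∈ Cᶜ, ⟪q i0, ((m i * m j) / ‖q i - q j‖ ^ 3) • (q i - q j)⟫
        ≤ ∑ i ∈ C, ∑ j ∈ Cᶜ, m i * m j * (R / ε ^ 2) := by
      refine Finset.sum_le_sum fun i hi => Finset.sum_le_sum fun j hj => hup i hi j hj
    refine le_trans h1 ?_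
    have h2 : ∑ i ∈ C, ∑ j ∈ Cᶜ, m i * m j * (R / ε ^ 2)
        = A * ((∑ j ∈ Cᶜ, m j) * (R / ε ^ 2)) := by
      rw [hA, Finset.sum_mul]
      refine Finset.sum_congr rfl fun i _ => ?_
      simp only [Finset.sum_mul, Finset.mul_sum]
      exact Finset.sum_congr rfl fun j _ => by ring
    rw [h2]
    have h3 : ∑ j ∈ Cᶜ, m j ≤ M := by
      rw [hM]
      exact Finset.sum_le_sum_of_subset_of_nonneg (Finset.subset_univ _)
        (fun i _ _ => le_of_lt (hm i))
    have h4 : 0 ≤ R / ε ^ 2 := div_nonneg (le_of_lt hR0) (by positivity)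
    have := mul_le_mul_of_nonneg_right h3 h4
    exact mul_le_mul_of_nonneg_left this (le_of_lt hApos)
  -- combine
  have hfin : A * (R * (R - ((n : ℝ) - 2) * ε)) < A * (M * (R / ε ^ 2)) := by
    rw [hid] at hL
    exact lt_of_lt_of_le hL hU
  have h5 : R * (R - ((n : ℝ) - 2) * ε) < M * (R / ε ^ 2) :=
    (mul_lt_mul_iff_right₀ hApos).mp hfin
  have h6 : M * (R / ε ^ 2) = R * (M / ε ^ 2) := by ring
  rw [h6] at h5
  exact (mul_lt_mul_iff_right₀ hR0).mp h5

theorem centralConfig_cluster_size_estimate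
    (n : ℕ) (hn : 3 ≤ n)
    (q : Fin n → EuclideanSpace ℝ (Fin 2)) (m : Fin n → ℝ) (R : ℝ) (i0 : Fin n)
    (hm : ∀ i, 0 < m i)
    (hq : ∀ i j, i ≠ j → q i ≠ q j)
    (hcc : ∀ i, q i = ∑ j ∈ Finset.univ \ {i},
      (m j / ‖q i - q j‖ ^ 3) • (q i - q j))
    (hR : R = ‖q i0‖)
    (hmax : ∀ i, ‖q i‖ ≤ R) :
    ∀ ε : ℝ, 0 < ε → ε < R / ((n : ℝ) - 1) →
      R - ((n : ℝ) - 2) * ε < (∑ i, m i) / ε ^ 2 := by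
  intro ε hε hεR
  have hn1 : (1 : ℝ) ≤ (n : ℝ) - 1 := by
    have : (3 : ℝ) ≤ (n : ℝ) := by exact_mod_cast hn
    linarith
  -- R > 0
  have hR0 : 0 < R := by
    by_contra h
    push_neg at h
    have h01 : (⟨0, by omega⟩ : Fin n) ≠ (⟨1, by omega⟩ : Fin n) := by
      simp [Fin.ext_iff]
    have hz : ∀ i : Fin n, q i = 0 := by
      intro i
      have := le_trans (hmax i) h
      simpa using le_antisymm this (norm_nonneg _)
    exact hq _ _ h01 (by rw [hz, hz])
  have hn1R : ((n : ℝ) - 1) * ε < R := by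
    have h := (lt_div_iff₀ (show (0:ℝ) < (n:ℝ)-1 by linarith)).mp hεR
    linarith
  -- pigeonhole: classify bodies by annulus index
  set g : Fin n → ℕ := fun j => ⌊‖q j - q i0‖ / ε⌋₊ with hg
  by_cases hcase : ∃ k < n - 1, ∀ j : Fin n, j ≠ i0 → g j ≠ k
  · obtain ⟨k, hk, hkempty⟩ := hcase
    -- cluster
    set C : Finset (Fin n) :=
      insert i0 (Finset.univ.filter (fun i => ‖q i - q i0‖ < (k : ℝ) * ε)) with hC
    have hi0C : i0 ∈ C := Finset.mem_insert_self _ _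
    have hCnear : ∀ i ∈ C, ‖q i - q i0‖ ≤ (k : ℝ) * ε := by
      intro i hi
      rcases Finset.mem_insert.mp hi with h | h
      · rw [h]; simp; positivity
      · exact le_of_lt (Finset.mem_filter.mp h).2
    have hkn2 : (k : ℝ) ≤ (n : ℝ) - 2 := by
      have : (k : ℝ) < (n : ℝ) - 1 := by
        have : k < n - 1 := hk
        have h2 : (k : ℝ) < ((n - 1 : ℕ) : ℝ) := by exact_mod_cast this
        rwa [Nat.cast_sub (by omega), Nat.cast_one] at h2
      have hkint : k ≤ n - 2 := by omega
      have h3 : (k : ℝ) ≤ ((n - 2 : ℕ) : ℝ) := by exact_mod_cast hkint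
      rwa [Nat.cast_sub (by omega), Nat.cast_ofNat] at h3
    have hnear : ∀ i ∈ C, ‖q i - q i0‖ ≤ ((n : ℝ) - 2) * ε := by
      intro i hi
      exact le_trans (hCnear i hi) (mul_le_mul_of_nonneg_right hkn2 (le_of_lt hε))
    have hfarann : ∀ j : Fin n, j ∉ C → ((k : ℝ) + 1) * ε ≤ ‖q j - q i0‖ := by
      intro j hj
      have hji0 : j ≠ i0 := fun h => hj (h ▸ hi0C)
      have h1 : ¬ (‖q j - q i0‖ < (k : ℝ) * ε) := by
        intro h
        exact hj (Finset.mem_insert.mpr (Or.inr (Finset.mem_filter.mpr ⟨Finset.mem_univ _, h⟩)))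
      push_neg at h1
      by_contra h2
      push_neg at h2
      have : g j = k := by
        rw [hg]
        rw [Nat.floor_eq_iff (by positivity)]
        constructor
        · rw [le_div_iff₀ hε]; exact h1
        · rw [div_lt_iff₀ hε]; linarith
      exact hkempty j hji0 this
    have hfar : ∀ i ∈ C, ∀ j ∉ C, ε ≤ ‖q i - q j‖ := by
      intro i hi j hj
      have h1 := hfarann j hj
      have h2 := hCnear i hi
      have h3 : ‖q j - q i0‖ - ‖q i - q i0‖ ≤ ‖q j - q i‖ := by
        have := norm_sub_norm_le (q j - q i0) (q i - q i0)
        simpa [sub_sub_sub_cancel_right] using this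
      rw [norm_sub_rev]
      linarith
    exact cc_cluster_bound n hn q m R i0 hm hq hcc hR hR0 hmax ε hε C hi0C hnear hfar
  · -- all annuli 0..n-2 occupied: every body is within (n-1)ε < R of q i0; contradiction
    exfalso
    push_neg at hcase
    -- range (n-1) ⊆ image of g over univ \ {i0}
    have hsub : Finset.range (n - 1) ⊆ (Finset.univ \ {i0}).image g := by
      intro k hk
      obtain ⟨j, hji0, hgj⟩ := hcase k (Finset.mem_range.mp hk)
      exact Finset.mem_image.mpr ⟨j, Finset.mem_sdiff.mpr ⟨Finset.mem_univ _, by simpa using hji0⟩, hgj⟩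
    have hcard : ((Finset.univ \ {i0}).image g).card ≤ n - 1 := by
      calc ((Finset.univ \ {i0}).image g).card ≤ (Finset.univ \ {i0}).card :=
            Finset.card_image_le
        _ = n - 1 := by
            rw [Finset.card_sdiff_of_subset (by simp)]
            simp
    have heq : Finset.range (n - 1) = (Finset.univ \ {i0}).image g :=
      Finset.eq_of_subset_of_card_le hsub (by simpa using hcard)
    -- hence every j ≠ i0 has g j < n - 1
    have hall : ∀ j : Fin n, ‖q j - q i0‖ < ((n : ℝ) - 1) * ε := by
      intro j
      by_cases hji0 : j = i0
      · rw [hji0]; simp; positivity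
      · have hjim : g j ∈ (Finset.univ \ {i0}).image g :=
          Finset.mem_image.mpr ⟨j, Finset.mem_sdiff.mpr ⟨Finset.mem_univ _, by simpa using hji0⟩, rfl⟩
        rw [← heq] at hjim
        have hgj : g j < n - 1 := Finset.mem_range.mp hjim
        have : ‖q j - q i0‖ / ε < ((n - 1 : ℕ) : ℝ) := Nat.lt_of_floor_lt hgj
        rw [div_lt_iff₀ hε] at this
        rw [Nat.cast_sub (by omega), Nat.cast_one] at this
        linarith
    -- total: ∑ m i • q i = 0
    have htot : ∑ i, m i • q i = 0 := by
      have := cluster_identity q m hcc Finset.univ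
      simpa using this
    -- positivity of each ⟪q i0, q i⟫
    have hpos : ∀ i : Fin n, 0 < m i * ⟪q i0, q i⟫ := by
      intro i
      refine mul_pos (hm i) ?_
      have h1 : ⟪q i0, q i0 - q i⟫ ≤ R * ‖q i - q i0‖ := by
        calc ⟪q i0, q i0 - q i⟫ ≤ ‖q i0‖ * ‖q i0 - q i‖ := real_inner_le_norm _ _
          _ = R * ‖q i - q i0‖ := by rw [← hR, norm_sub_rev]
      have h2 : ⟪q i0, q i⟫ = ⟪q i0, q i0⟫ - ⟪q i0, q i0 - q i⟫ := by
        rw [inner_sub_right]; ring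
      have h3 : ⟪q i0, q i0⟫ = R * R := by
        rw [real_inner_self_eq_norm_mul_norm, hR]
      have h4 := hall i
      rw [h2, h3]
      nlinarith
    have hsum : 0 < ∑ i, m i * ⟪q i0, q i⟫ :=
      Finset.sum_pos (fun i _ => hpos i) ⟨i0, Finset.mem_univ _⟩
    have : ∑ i, m i * ⟪q i0, q i⟫ = 0 := by
      calc ∑ i, m i * ⟪q i0, q i⟫ = ⟪q i0, ∑ i, m i • q i⟫ := by
            rw [inner_sum]
            exact Finset.sum_congr rfl fun i _ => (real_inner_smul_right _ _ _).symm
        _ = 0 := by rw [htot]; exact inner_zero_right _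
    linarith
end

section
/- Let q be a normalized central configuration in the plane with total mass M = 1 and n ≥ 4 bodies. Then max_i |q_i| ≤ (2^{1/3} + 2^{−2/3}) (n−2)^{2/3}. -/
set_option maxHeartbeats 1600000 in
theorem centralConfig_size_upper_bound_cubic
    (n : ℕ) (hn : 4 ≤ n)
    (q : Fin n → EuclideanSpace ℝ (Fin 2)) (m : Fin n → ℝ)
    (hm : ∀ i, 0 < m i)
    (hM : ∑ i, m i = 1)
    (hq : ∀ i j, i ≠ j → q i ≠ q j)
    (hcc : ∀ i, q i = ∑ j ∈ Finset.univ \ {i},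
      (m j / ‖q i - q j‖ ^ 3) • (q i - q j)) :
    ∀ i, ‖q i‖ ≤
      ((2 : ℝ) ^ ((1 : ℝ) / 3) + (2 : ℝ) ^ (-(2 : ℝ) / 3)) *
        ((n : ℝ) - 2) ^ ((2 : ℝ) / 3) := by
  classical
  have hn4 : (4:ℝ) ≤ (n:ℝ) := by exact_mod_cast hn
  have hn2 : (0:ℝ) ≤ (n:ℝ) - 2 := by linarith
  have hRHSnn : 0 ≤ ((2:ℝ) ^ ((1:ℝ)/3) + (2:ℝ) ^ (-(2:ℝ)/3)) * ((n:ℝ) - 2) ^ ((2:ℝ)/3) :=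
    mul_nonneg (by positivity) (Real.rpow_nonneg hn2 _)
  have hC3 : (4:ℝ) ≤ ((2:ℝ) ^ ((1:ℝ)/3) + (2:ℝ) ^ (-(2:ℝ)/3)) ^ 3 := by
    have ht0 : (0:ℝ) < (2:ℝ) ^ ((1:ℝ)/3) := Real.rpow_pos_of_pos (by norm_num) _
    have hs0 : (0:ℝ) < (2:ℝ) ^ (-(2:ℝ)/3) := Real.rpow_pos_of_pos (by norm_num) _
    have ht3 : ((2:ℝ) ^ ((1:ℝ)/3)) ^ 3 = 2 := by
      rw [← Real.rpow_natCast ((2:ℝ) ^ ((1:ℝ)/3)) 3,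
        ← Real.rpow_mul (by norm_num : (0:ℝ) ≤ 2)]
      norm_num
    have hst : (2:ℝ) ^ (-(2:ℝ)/3) * ((2:ℝ) ^ ((1:ℝ)/3)) ^ 2 = 1 := by
      rw [← Real.rpow_natCast ((2:ℝ) ^ ((1:ℝ)/3)) 2,
        ← Real.rpow_mul (by norm_num : (0:ℝ) ≤ 2),
        ← Real.rpow_add (by norm_num : (0:ℝ) < 2)]
      norm_num
    nlinarith [ht0.le, hs0.le, ht3, hst,
      mul_nonneg (mul_nonneg hs0.le hs0.le) ht0.le,
      mul_nonneg (mul_nonneg hs0.le hs0.le) hs0.le]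
  intro i
  rcases le_or_gt ‖q i‖ 0 with hR | hR
  · exact hR.trans hRHSnn
  obtain ⟨u, hu_def⟩ : ∃ u : EuclideanSpace ℝ (Fin 2), u = ‖q i‖⁻¹ • q i := ⟨_, rfl⟩
  have hu : ‖u‖ = 1 := by
    rw [hu_def, norm_smul, norm_inv, Real.norm_of_nonneg (norm_nonneg (q i))]
    exact inv_mul_cancel₀ hR.ne'
  obtain ⟨x, hx⟩ : ∃ x : Fin n → ℝ, x = fun k => (inner ℝ u (q k) : ℝ) := ⟨_, rfl⟩
  have hxi : x i = ‖q i‖ := by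
    simp only [hx, hu_def]
    rw [real_inner_smul_left, real_inner_self_eq_norm_sq, pow_two, ← mul_assoc,
      inv_mul_cancel₀ hR.ne', one_mul]
  have hproj : ∀ k, x k = ∑ j ∈ Finset.univ \ {k},
      (m j / ‖q k - q j‖ ^ 3) * (x k - x j) := by
    intro k
    simp only [hx]
    conv_lhs => rw [hcc k]
    rw [inner_sum]
    exact Finset.sum_congr rfl fun j _ => by rw [real_inner_smul_right, inner_sub_right]
  -- Claim A: gap estimate
  have claimA : ∀ k, 0 < x k → ∃ j, x j < x k ∧ (x k - x j) ^ 2 * x k ≤ 1 := by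
    intro k hk
    have hne : ∃ j0, x j0 < x k := by
      by_contra hcon
      push_neg at hcon
      have hle : x k ≤ 0 := by
        rw [hproj k]
        apply Finset.sum_nonpos
        intro p _
        have h1 : (0:ℝ) ≤ m p / ‖q k - q p‖ ^ 3 :=
          div_nonneg (hm p).le (by positivity)
        have h2 : x k - x p ≤ 0 := sub_nonpos.2 (hcon p)
        exact mul_nonpos_of_nonneg_of_nonpos h1 h2
      linarith
    obtain ⟨j0, hj0⟩ := hne
    obtain ⟨j, hjmem, hjmax⟩ := Finset.exists_max_image
      (Finset.univ.filter fun p => x p < x k) x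
      ⟨j0, Finset.mem_filter.2 ⟨Finset.mem_univ _, hj0⟩⟩
    have hjlt : x j < x k := (Finset.mem_filter.1 hjmem).2
    refine ⟨j, hjlt, ?_⟩
    have hgpos : 0 < x k - x j := sub_pos.2 hjlt
    have hg2 : (0:ℝ) < (x k - x j) ^ 2 := by positivity
    have hterm : ∀ p ∈ Finset.univ \ {k},
        (m p / ‖q k - q p‖ ^ 3) * (x k - x p) ≤ m p / (x k - x j) ^ 2 := by
      intro p hp
      have hpne : p ≠ k := by simpa using (Finset.mem_sdiff.1 hp).2
      have hqq : q k ≠ q p := hq k p hpne.symm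
      have hrpos : 0 < ‖q k - q p‖ := by
        rw [norm_sub_pos_iff]; exact hqq
      rcases lt_or_ge (x p) (x k) with hplt | hpge
      · have hgd : x k - x j ≤ x k - x p := by
          have := hjmax p (Finset.mem_filter.2 ⟨Finset.mem_univ _, hplt⟩)
          linarith
        have hdpos : 0 < x k - x p := sub_pos.2 hplt
        have hdr : x k - x p ≤ ‖q k - q p‖ := by
          have h1 : x k - x p = (inner ℝ u (q k - q p) : ℝ) := by
            simp only [hx]; rw [inner_sub_right]
          rw [h1]
          calc (inner ℝ u (q k - q p) : ℝ) ≤ ‖u‖ * ‖q k - q p‖ :=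
                real_inner_le_norm _ _
            _ = ‖q k - q p‖ := by rw [hu, one_mul]
        have h3 : (x k - x p) ^ 3 ≤ ‖q k - q p‖ ^ 3 :=
          pow_le_pow_left₀ hdpos.le hdr 3
        have hdg2 : (x k - x j) ^ 2 ≤ (x k - x p) ^ 2 :=
          pow_le_pow_left₀ hgpos.le hgd 2
        rw [div_mul_eq_mul_div, div_le_div_iff₀ (pow_pos hrpos 3) hg2]
        calc m p * (x k - x p) * (x k - x j) ^ 2
            ≤ m p * (x k - x p) * (x k - x p) ^ 2 :=
              mul_le_mul_of_nonneg_left hdg2 (mul_nonneg (hm p).le hdpos.le)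
          _ = m p * (x k - x p) ^ 3 := by ring
          _ ≤ m p * ‖q k - q p‖ ^ 3 := mul_le_mul_of_nonneg_left h3 (hm p).le
      · have h1 : (m p / ‖q k - q p‖ ^ 3) * (x k - x p) ≤ 0 :=
          mul_nonpos_of_nonneg_of_nonpos
            (div_nonneg (hm p).le (by positivity)) (by linarith)
        have h2 : (0:ℝ) ≤ m p / (x k - x j) ^ 2 :=
          div_nonneg (hm p).le hg2.le
        linarith
    have hmle : ∑ p ∈ Finset.univ \ {k}, m p ≤ 1 := by
      have h1 : ∑ p ∈ Finset.univ \ {k}, m p = (∑ p, m p) - m k := by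
        rw [Finset.sum_sdiff_eq_sub (Finset.subset_univ {k}), Finset.sum_singleton]
      rw [h1, hM]; linarith [hm k]
    have hfin : x k ≤ 1 / (x k - x j) ^ 2 := by
      calc x k = ∑ p ∈ Finset.univ \ {k},
            (m p / ‖q k - q p‖ ^ 3) * (x k - x p) := hproj k
        _ ≤ ∑ p ∈ Finset.univ \ {k}, m p / (x k - x j) ^ 2 :=
            Finset.sum_le_sum hterm
        _ = (∑ p ∈ Finset.univ \ {k}, m p) / (x k - x j) ^ 2 := by
            rw [Finset.sum_div]
        _ ≤ 1 / (x k - x j) ^ 2 := by gcongr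
    rw [le_div_iff₀ hg2] at hfin
    calc (x k - x j) ^ 2 * x k = x k * (x k - x j) ^ 2 := by ring
      _ ≤ 1 := hfin
  obtain ⟨B, hB⟩ : ∃ B : Fin n → Finset (Fin n),
      B = fun k => Finset.univ.filter (fun p => x p < x k) := ⟨_, rfl⟩
  -- Key descent estimate by strong induction on the number of bodies below
  have keyB : ∀ c : ℕ, ∀ k : Fin n, 0 < x k → (B k).card ≤ c →
      x k * Real.sqrt (x k) ≤ 3/2 * (((B k).card : ℝ) - 1) + 1 := by
    intro c
    induction c with
    | zero =>
      intro k hk hc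
      obtain ⟨j, hjlt, -⟩ := claimA k hk
      have hmem : j ∈ B k := by
        simp only [hB, Finset.mem_filter]
        exact ⟨Finset.mem_univ _, hjlt⟩
      have := Finset.card_pos.2 ⟨j, hmem⟩
      omega
    | succ c ih =>
      intro k hk hc
      obtain ⟨j, hjlt, hjineq⟩ := claimA k hk
      have hmemj : j ∈ B k := by
        simp only [hB, Finset.mem_filter]
        exact ⟨Finset.mem_univ _, hjlt⟩
      have hcard1 : (1:ℝ) ≤ ((B k).card : ℝ) := by
        exact_mod_cast Finset.card_pos.2 ⟨j, hmemj⟩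
      rcases le_or_gt (x j) 0 with hy | hy
      · -- base: next body is at nonpositive height, so x k ≤ 1
        have hxd : x k ≤ x k - x j := by linarith
        have h2 : x k ^ 2 ≤ (x k - x j) ^ 2 := pow_le_pow_left₀ hk.le hxd 2
        have h3 : x k ^ 3 ≤ 1 := by nlinarith [hjineq, h2, hk]
        have hx1 : x k ≤ 1 :=
          le_of_pow_le_pow_left₀ (by norm_num : (3:ℕ) ≠ 0) zero_le_one
            (by simpa using h3)
        have hs1 : Real.sqrt (x k) ≤ 1 := by
          have := Real.sqrt_le_sqrt hx1
          rwa [Real.sqrt_one] at this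
        have hle1 : x k * Real.sqrt (x k) ≤ 1 := by
          nlinarith [hx1, hs1, Real.sqrt_nonneg (x k), hk]
        linarith
      · -- inductive step
        have hsub : B j ⊆ B k := by
          intro p hp
          simp only [hB, Finset.mem_filter] at hp ⊢
          exact ⟨hp.1, hp.2.trans hjlt⟩
        have hjnot : j ∉ B j := by
          simp only [hB, Finset.mem_filter]
          rintro ⟨-, h⟩
          exact lt_irrefl _ h
        have hss : B j ⊂ B k :=
          (Finset.ssubset_iff_of_subset hsub).2 ⟨j, hmemj, hjnot⟩
        have hlt : (B j).card < (B k).card := Finset.card_lt_card hss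
        have ihj := ih j hy (by omega)
        have hs2 : Real.sqrt (x k) ^ 2 = x k := Real.sq_sqrt hk.le
        have ht2 : Real.sqrt (x j) ^ 2 = x j := Real.sq_sqrt hy.le
        have hts : Real.sqrt (x j) ≤ Real.sqrt (x k) := Real.sqrt_le_sqrt hjlt.le
        have ht0 : 0 ≤ Real.sqrt (x j) := Real.sqrt_nonneg _
        have hs0 : 0 ≤ Real.sqrt (x k) := Real.sqrt_nonneg _
        have hds : ((x k - x j) * Real.sqrt (x k)) ^ 2 ≤ 1 := by
          rw [mul_pow, hs2]; exact hjineq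
        have hds1 : (x k - x j) * Real.sqrt (x k) ≤ 1 := by
          nlinarith [hds, mul_nonneg (by linarith : (0:ℝ) ≤ x k - x j) hs0]
        have hid : x j * Real.sqrt (x j) + 3/2 * ((x k - x j) * Real.sqrt (x k))
              - x k * Real.sqrt (x k)
            = (1/2) * (Real.sqrt (x k) - Real.sqrt (x j)) ^ 2
                * (Real.sqrt (x k) + 2 * Real.sqrt (x j)) := by
          linear_combination (-(1/2) * Real.sqrt (x k)) * hs2 +
            ((3/2) * Real.sqrt (x k) - Real.sqrt (x j)) * ht2
        have hnn : (0:ℝ) ≤ (1/2) * (Real.sqrt (x k) - Real.sqrt (x j)) ^ 2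
                * (Real.sqrt (x k) + 2 * Real.sqrt (x j)) :=
          mul_nonneg (mul_nonneg (by norm_num) (sq_nonneg _)) (by linarith)
        have hconv : x k * Real.sqrt (x k) ≤
            x j * Real.sqrt (x j) + 3/2 * ((x k - x j) * Real.sqrt (x k)) := by
          linarith [hid, hnn]
        have hcast : ((B j).card : ℝ) + 1 ≤ ((B k).card : ℝ) := by
          exact_mod_cast hlt
        linarith
  -- Apply at body i
  have hxipos : 0 < x i := by rw [hxi]; exact hR
  have hKB := keyB (B i).card i hxipos le_rfl
  have hBsub : B i ⊆ Finset.univ.erase i := by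
    intro p hp
    simp only [hB, Finset.mem_filter] at hp
    refine Finset.mem_erase.2 ⟨?_, Finset.mem_univ _⟩
    rintro rfl
    exact lt_irrefl _ hp.2
  have hBcard : ((B i).card : ℝ) ≤ (n:ℝ) - 1 := by
    have h1 : (B i).card ≤ n - 1 := by
      have := Finset.card_le_card hBsub
      rwa [Finset.card_erase_of_mem (Finset.mem_univ _), Finset.card_univ,
        Fintype.card_fin] at this
    have h2 : ((B i).card : ℝ) ≤ ((n - 1 : ℕ) : ℝ) := Nat.cast_le.2 h1
    rwa [Nat.cast_sub (by omega), Nat.cast_one] at h2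
  rw [hxi] at hKB
  have hK : ‖q i‖ * Real.sqrt ‖q i‖ ≤ 2 * ((n:ℝ) - 2) := by linarith
  have hR3 : ‖q i‖ ^ 3 ≤ 4 * ((n:ℝ) - 2) ^ 2 := by
    have h1 : (‖q i‖ * Real.sqrt ‖q i‖) ^ 2 = ‖q i‖ ^ 3 := by
      rw [mul_pow, Real.sq_sqrt (norm_nonneg (q i))]; ring
    have h2 : (‖q i‖ * Real.sqrt ‖q i‖) ^ 2 ≤ (2 * ((n:ℝ) - 2)) ^ 2 :=
      pow_le_pow_left₀ (mul_nonneg (norm_nonneg _) (Real.sqrt_nonneg _)) hK 2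
    nlinarith [h1, h2]
  have hP3 : ((((n:ℝ) - 2) ^ ((2:ℝ)/3)) : ℝ) ^ (3:ℕ) = ((n:ℝ) - 2) ^ 2 := by
    rw [← Real.rpow_natCast (((n:ℝ) - 2) ^ ((2:ℝ)/3)) 3, ← Real.rpow_mul hn2,
      show ((2:ℝ)/3) * ((3:ℕ):ℝ) = ((2:ℕ):ℝ) by norm_num,
      Real.rpow_natCast]
  refine le_of_pow_le_pow_left₀ (by norm_num : (3:ℕ) ≠ 0) hRHSnn ?_
  calc ‖q i‖ ^ 3 ≤ 4 * ((n:ℝ) - 2) ^ 2 := hR3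
    _ ≤ (((2:ℝ) ^ ((1:ℝ)/3) + (2:ℝ) ^ (-(2:ℝ)/3)) ^ 3) * (((n:ℝ) - 2) ^ 2) :=
        mul_le_mul_of_nonneg_right hC3 (sq_nonneg _)
    _ = (((2:ℝ) ^ ((1:ℝ)/3) + (2:ℝ) ^ (-(2:ℝ)/3)) * ((n:ℝ) - 2) ^ ((2:ℝ)/3)) ^ 3 := by
        rw [mul_pow, hP3]
end

section
/- Let q be a normalized central configuration in the plane with total mass M = 1 and n ≥ 2 bodies. Then max_i |q_i| ≤ n − 1. -/
open Finset

local notation "⟪" x ", " y "⟫" => @inner ℝ _ _ x y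

private lemma antisym_sum {n : ℕ} (C : Finset (Fin n)) (g : Fin n → Fin n → ℝ)
    (hg : ∀ k l, g k l = - g l k) :
    ∑ k ∈ C, ∑ l ∈ C.erase k, g k l = 0 := by
  have hswap : ∑ k ∈ C, ∑ l ∈ C.erase k, g k l = ∑ l ∈ C, ∑ k ∈ C.erase l, g k l :=
    Finset.sum_comm' (by
      intro x y
      simp only [Finset.mem_erase]
      constructor
      · rintro ⟨hx, hy, hyC⟩; exact ⟨⟨fun h => hy (h.symm), hx⟩, hyC⟩
      · rintro ⟨⟨hxy, hx⟩, hyC⟩; exact ⟨hx, fun h => hxy h.symm, hyC⟩)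
  have h2 : ∑ l ∈ C, ∑ k ∈ C.erase l, g k l
      = - ∑ l ∈ C, ∑ k ∈ C.erase l, g l k := by
    rw [← Finset.sum_neg_distrib]
    refine Finset.sum_congr rfl fun l _ => ?_
    rw [← Finset.sum_neg_distrib]
    exact Finset.sum_congr rfl fun k _ => hg k l
  have h3 := hswap.trans h2
  linarith

private lemma master_estimate {n : ℕ}
    (q : Fin n → EuclideanSpace ℝ (Fin 2)) (m : Fin n → ℝ)
    (hm : ∀ i, 0 ≤ m i)
    (hcc : ∀ i, q i = ∑ j ∈ Finset.univ \ {i},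
      (m j / ‖q i - q j‖ ^ 3) • (q i - q j))
    (i : Fin n) (u : EuclideanSpace ℝ (Fin 2)) (hu : ‖u‖ = 1)
    (hui : ⟪u, q i⟫ = ‖q i‖)
    (C : Finset (Fin n)) (hiC : i ∈ C) (τ : ℝ)
    (hτ : ∀ k ∈ C, ‖q i - q k‖ ≤ τ)
    (hsep : ∀ k ∈ C, ∀ l ∈ Finset.univ \ C, (1:ℝ) ≤ ‖q k - q l‖) :
    (∑ k ∈ C, m k) * (‖q i‖ - τ) ≤ (∑ k ∈ C, m k) * (∑ l ∈ Finset.univ \ C, m l) := by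
  set g : Fin n → Fin n → ℝ :=
    fun k l => m k * ((m l / ‖q k - q l‖ ^ 3) * ⟪u, q k - q l⟫) with hg_def
  -- each body's equation, projected on u and multiplied by its mass
  have step1 : ∀ k, m k * ⟪u, q k⟫ = ∑ l ∈ Finset.univ.erase k, g k l := by
    intro k
    conv_lhs => rw [hcc k]
    rw [inner_sum, Finset.mul_sum, ← Finset.erase_eq]
    refine Finset.sum_congr rfl fun l _ => ?_
    rw [real_inner_smul_right]
  -- antisymmetry of g
  have hganti : ∀ k l, g k l = - g l k := by
    intro k l
    simp only [hg_def]
    rw [show q l - q k = -(q k - q l) by abel, inner_neg_right, norm_neg]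
    ring
  -- split sums over C into internal (cancels) and cross part
  have step2 : ∑ k ∈ C, m k * ⟪u, q k⟫
      = ∑ k ∈ C, ∑ l ∈ Finset.univ \ C, g k l := by
    have hsplit : ∀ k ∈ C, ∑ l ∈ Finset.univ.erase k, g k l
        = ∑ l ∈ C.erase k, g k l + ∑ l ∈ Finset.univ \ C, g k l := by
      intro k hk
      rw [← Finset.sum_union]
      · congr 1
        ext l
        simp only [Finset.mem_erase, Finset.mem_union, Finset.mem_sdiff, Finset.mem_univ,
          true_and, and_true]
        constructor
        · intro hl
          by_cases hlC : l ∈ C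
          · exact Or.inl ⟨hl, hlC⟩
          · exact Or.inr hlC
        · rintro (⟨hl, _⟩ | hl)
          · exact hl
          · intro h; exact hl (h ▸ hk)
      · refine Finset.disjoint_left.mpr ?_
        intro a ha hb
        simp only [Finset.mem_erase] at ha
        simp only [Finset.mem_sdiff] at hb
        exact hb.2 ha.2
    calc ∑ k ∈ C, m k * ⟪u, q k⟫
        = ∑ k ∈ C, (∑ l ∈ C.erase k, g k l + ∑ l ∈ Finset.univ \ C, g k l) := by
          refine Finset.sum_congr rfl fun k hk => ?_
          rw [step1 k, hsplit k hk]
      _ = (∑ k ∈ C, ∑ l ∈ C.erase k, g k l) + ∑ k ∈ C, ∑ l ∈ Finset.univ \ C, g k l := by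
          rw [Finset.sum_add_distrib]
      _ = ∑ k ∈ C, ∑ l ∈ Finset.univ \ C, g k l := by
          rw [antisym_sum C g hganti, zero_add]
  -- lower bound for the left side
  have lower : (∑ k ∈ C, m k) * (‖q i‖ - τ) ≤ ∑ k ∈ C, m k * ⟪u, q k⟫ := by
    rw [Finset.sum_mul]
    refine Finset.sum_le_sum fun k hk => ?_
    have h1 : ⟪u, q i - q k⟫ ≤ ‖q i - q k‖ := by
      have := real_inner_le_norm u (q i - q k)
      rwa [hu, one_mul] at this
    have h2 : ⟪u, q i - q k⟫ = ‖q i‖ - ⟪u, q k⟫ := by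
      rw [inner_sub_right, hui]
    have h3 : ‖q i‖ - τ ≤ ⟪u, q k⟫ := by
      have := hτ k hk
      linarith
    exact mul_le_mul_of_nonneg_left h3 (hm k)
  -- upper bound for the cross terms
  have upper : ∑ k ∈ C, ∑ l ∈ Finset.univ \ C, g k l
      ≤ (∑ k ∈ C, m k) * (∑ l ∈ Finset.univ \ C, m l) := by
    rw [Finset.sum_mul_sum]
    refine Finset.sum_le_sum fun k hk => Finset.sum_le_sum fun l hl => ?_
    have hr : (1:ℝ) ≤ ‖q k - q l‖ := hsep k hk l hl
    have hrpos : (0:ℝ) < ‖q k - q l‖ := lt_of_lt_of_le one_pos hr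
    have hip : ⟪u, q k - q l⟫ ≤ ‖q k - q l‖ := by
      have := real_inner_le_norm u (q k - q l)
      rwa [hu, one_mul] at this
    have h1 : (m l / ‖q k - q l‖ ^ 3) * ⟪u, q k - q l⟫
        ≤ (m l / ‖q k - q l‖ ^ 3) * ‖q k - q l‖ :=
      mul_le_mul_of_nonneg_left hip (div_nonneg (hm l) (by positivity))
    have h2 : (m l / ‖q k - q l‖ ^ 3) * ‖q k - q l‖ = m l / ‖q k - q l‖ ^ 2 := by
      field_simp
    have h3 : m l / ‖q k - q l‖ ^ 2 ≤ m l := by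
      apply div_le_self (hm l)
      nlinarith
    have : (m l / ‖q k - q l‖ ^ 3) * ⟪u, q k - q l⟫ ≤ m l := by
      rw [h2] at h1; linarith
    exact mul_le_mul_of_nonneg_left this (hm k)
  calc (∑ k ∈ C, m k) * (‖q i‖ - τ)
      ≤ ∑ k ∈ C, m k * ⟪u, q k⟫ := lower
    _ = ∑ k ∈ C, ∑ l ∈ Finset.univ \ C, g k l := step2
    _ ≤ (∑ k ∈ C, m k) * (∑ l ∈ Finset.univ \ C, m l) := upper

theorem centralConfig_size_upper_bound_linear
    (n : ℕ) (hn : 2 ≤ n)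
    (q : Fin n → EuclideanSpace ℝ (Fin 2)) (m : Fin n → ℝ)
    (hm : ∀ i, 0 < m i)
    (hM : ∑ i, m i = 1)
    (hq : ∀ i j, i ≠ j → q i ≠ q j)
    (hcc : ∀ i, q i = ∑ j ∈ Finset.univ \ {i},
      (m j / ‖q i - q j‖ ^ 3) • (q i - q j)) :
    ∀ i, ‖q i‖ ≤ (n : ℝ) - 1 := by
  intro i
  have hm0 : ∀ j, 0 ≤ m j := fun j => (hm j).le
  have hn2 : (2:ℝ) ≤ (n:ℝ) := by exact_mod_cast hn
  have hn1 : (1:ℝ) ≤ (n:ℝ) - 1 := by linarith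
  by_cases h0 : q i = 0
  · rw [h0, norm_zero]; linarith
  have hR : 0 < ‖q i‖ := norm_pos_iff.mpr h0
  set u : EuclideanSpace ℝ (Fin 2) := ‖q i‖⁻¹ • q i with hu_def
  have hu : ‖u‖ = 1 := by
    rw [hu_def, norm_smul, norm_inv, norm_norm]
    field_simp
  have hui : ⟪u, q i⟫ = ‖q i‖ := by
    rw [hu_def, real_inner_smul_left, real_inner_self_eq_norm_sq, sq, ← mul_assoc,
      inv_mul_cancel₀ hR.ne', one_mul]
  by_cases hA : ∀ j, ‖q i - q j‖ ≤ (n:ℝ) - 1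
  · -- all bodies within n-1 of body i
    have := master_estimate q m hm0 hcc i u hu hui Finset.univ (Finset.mem_univ i)
      ((n:ℝ) - 1) (fun k _ => hA k)
      (fun k _ l hl => by simp at hl)
    rw [hM, Finset.sdiff_self, Finset.sum_empty, one_mul, mul_zero] at this
    linarith
  · push_neg at hA
    obtain ⟨j₀, hj₀⟩ := hA
    set d : Fin n → ℝ := fun j => ‖q i - q j‖ with hd_def
    have hj₀i : j₀ ≠ i := by
      intro h
      rw [h] at hj₀
      rw [sub_self, norm_zero] at hj₀
      linarith
    -- pigeonhole: some shell (s-1, s], 1 ≤ s ≤ n-1, around q i is empty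
    set F : Finset (Fin n) :=
      Finset.univ.filter (fun j => d j ≤ (n:ℝ) - 1 ∧ j ≠ i) with hF_def
    have hFsub : F ⊆ (Finset.univ.erase i).erase j₀ := by
      intro j hj
      simp only [hF_def, Finset.mem_filter, Finset.mem_univ, true_and] at hj
      have hjj₀ : j ≠ j₀ := by
        intro h
        rw [h] at hj
        linarith [hj.1]
      simp [Finset.mem_erase, hjj₀, hj.2]
    have hFcard : F.card ≤ n - 2 := by
      have h1 : ((Finset.univ.erase i).erase j₀).card = n - 2 := by
        rw [Finset.card_erase_of_mem, Finset.card_erase_of_mem, Finset.card_univ,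
          Fintype.card_fin]
        · omega
        · exact Finset.mem_univ i
        · exact Finset.mem_erase.mpr ⟨hj₀i, Finset.mem_univ j₀⟩
      calc F.card ≤ ((Finset.univ.erase i).erase j₀).card := Finset.card_le_card hFsub
        _ = n - 2 := h1
    set f : Fin n → ℕ := fun j => ⌈d j⌉₊ with hf_def
    have himg : ∀ j ∈ F, f j ∈ Finset.Icc 1 (n - 1) := by
      intro j hj
      simp only [hF_def, Finset.mem_filter, Finset.mem_univ, true_and] at hj
      have hdj : 0 < d j := by
        simp only [hd_def]
        rw [norm_pos_iff, sub_ne_zero]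
        exact hq i j (fun h => hj.2 h.symm)
      refine Finset.mem_Icc.mpr ⟨Nat.one_le_ceil_iff.mpr hdj, ?_⟩
      rw [hf_def]
      apply Nat.ceil_le.mpr
      rw [Nat.cast_sub (by omega : 1 ≤ n), Nat.cast_one]
      exact hj.1
    obtain ⟨s, hsT, hsnot⟩ : ∃ s ∈ Finset.Icc 1 (n-1), s ∉ F.image f := by
      by_contra h
      push_neg at h
      have hsub : Finset.Icc 1 (n-1) ⊆ F.image f := h
      have := Finset.card_le_card hsub
      have himgcard : (F.image f).card ≤ F.card := Finset.card_image_le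
      rw [Nat.card_Icc] at this
      omega
    obtain ⟨hs1, hs2⟩ := Finset.mem_Icc.mp hsT
    have hsR : (s:ℝ) ≤ (n:ℝ) - 1 := by
      have : ((s:ℕ):ℝ) ≤ ((n-1:ℕ):ℝ) := by exact_mod_cast hs2
      rwa [Nat.cast_sub (by omega : 1 ≤ n), Nat.cast_one] at this
    have hshell : ∀ j, j ≠ i → ¬((s:ℝ) - 1 < d j ∧ d j ≤ (s:ℝ)) := by
      rintro j hji ⟨h1, h2⟩
      have hjF : j ∈ F := by
        simp only [hF_def, Finset.mem_filter, Finset.mem_univ, true_and]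
        exact ⟨le_trans h2 hsR, hji⟩
      have hfj : f j = s := by
        rw [hf_def]
        rw [Nat.ceil_eq_iff (by omega : s ≠ 0)]
        constructor
        · rwa [Nat.cast_sub hs1, Nat.cast_one]
        · exact h2
      exact hsnot (Finset.mem_image.mpr ⟨j, hjF, hfj⟩)
    set C : Finset (Fin n) := Finset.univ.filter (fun k => d k ≤ (s:ℝ) - 1) with hC_def
    have hiC : i ∈ C := by
      simp only [hC_def, Finset.mem_filter, Finset.mem_univ, true_and, hd_def]
      rw [sub_self, norm_zero]
      have : (1:ℝ) ≤ (s:ℝ) := by exact_mod_cast hs1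
      linarith
    have hτ : ∀ k ∈ C, ‖q i - q k‖ ≤ (s:ℝ) - 1 := by
      intro k hk
      simp only [hC_def, Finset.mem_filter] at hk
      exact hk.2
    have hsep : ∀ k ∈ C, ∀ l ∈ Finset.univ \ C, (1:ℝ) ≤ ‖q k - q l‖ := by
      intro k hk l hl
      simp only [Finset.mem_sdiff, hC_def, Finset.mem_filter, Finset.mem_univ, true_and] at hl
      have hdl1 : (s:ℝ) - 1 < d l := lt_of_not_ge hl
      have hli : l ≠ i := by
        intro h
        rw [h] at hl
        exact hl (by
          simp only [hd_def]
          rw [sub_self, norm_zero]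
          have : (1:ℝ) ≤ (s:ℝ) := by exact_mod_cast hs1
          linarith)
      have hdl : (s:ℝ) < d l := by
        by_contra hle
        push_neg at hle
        exact hshell l hli ⟨hdl1, hle⟩
      have htri : d l ≤ d k + ‖q k - q l‖ := by
        simp only [hd_def]
        calc ‖q i - q l‖ = ‖(q i - q k) + (q k - q l)‖ := by rw [sub_add_sub_cancel]
          _ ≤ ‖q i - q k‖ + ‖q k - q l‖ := norm_add_le _ _
      have hdk : d k ≤ (s:ℝ) - 1 := by
        simp only [hC_def, Finset.mem_filter] at hk
        exact hk.2
      linarith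
    have hmain := master_estimate q m hm0 hcc i u hu hui C hiC ((s:ℝ) - 1) hτ hsep
    have hMC : 0 < ∑ k ∈ C, m k :=
      Finset.sum_pos' (fun k _ => hm0 k) ⟨i, hiC, hm i⟩
    have hout : ∑ l ∈ Finset.univ \ C, m l ≤ 1 := by
      rw [← hM]
      exact Finset.sum_le_sum_of_subset_of_nonneg (Finset.sdiff_subset)
        (fun j _ _ => hm0 j)
    have h1 : (∑ k ∈ C, m k) * (‖q i‖ - ((s:ℝ) - 1)) ≤ (∑ k ∈ C, m k) * 1 := by
      calc (∑ k ∈ C, m k) * (‖q i‖ - ((s:ℝ) - 1))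
          ≤ (∑ k ∈ C, m k) * (∑ l ∈ Finset.univ \ C, m l) := hmain
        _ ≤ (∑ k ∈ C, m k) * 1 := mul_le_mul_of_nonneg_left hout hMC.le
    have h2 : ‖q i‖ - ((s:ℝ) - 1) ≤ 1 := le_of_mul_le_mul_left h1 hMC
    linarith
end

section
/- Cluster exclusion criterion: let C ⊆ {1,...,n} and Z a set of configurations. If I_{C,Z} < U_{C,Z} + F_{C,Z}, where U_{C,Z} = inf_{q∈Z} Σ_{i<j, i,j∈C} m_i m_j / r_{ij}, I_{C,Z} = sup_{q∈Z} Σ_{i∈C} m_i |q_i|², and F_{C,Z} = inf_{q∈Z} Σ_{i∈C, k∉C} (m_i m_k / r_{ik}^3) ⟨q_i − q_k, q_i⟩ (with F_{C,Z} = 0 if C = {1,...,n}), and all three quantities are finite real numbers, then Z contains no normalized central configuration. -/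
lemma sum_erase_symmetrize {α : Type*} [LinearOrder α] [DecidableEq α]
    (C : Finset α) (f : α → α → ℝ) :
    ∑ i ∈ C, ∑ j ∈ C.erase i, f i j
      = ∑ i ∈ C, ∑ j ∈ C.filter (fun j => i < j), (f i j + f j i) := by
  have h1 : ∀ i, C.erase i
      = C.filter (fun j => i < j) ∪ C.filter (fun j => j < i) := by
    intro i; ext j
    simp only [Finset.mem_erase, Finset.mem_union, Finset.mem_filter]
    constructor
    · rintro ⟨hne, hj⟩
      rcases lt_or_gt_of_ne hne.symm with h | h
      · exact Or.inl ⟨hj, h⟩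
      · exact Or.inr ⟨hj, h⟩
    · rintro (⟨hj, h⟩ | ⟨hj, h⟩)
      · exact ⟨h.ne', hj⟩
      · exact ⟨h.ne, hj⟩
  have hdisj : ∀ i : α, Disjoint (C.filter (fun j => i < j))
      (C.filter (fun j => j < i)) := by
    intro i
    rw [Finset.disjoint_left]
    intro a ha hb
    simp only [Finset.mem_filter] at ha hb
    exact absurd (ha.2.trans hb.2) (lt_irrefl i)
  have h2 : ∑ i ∈ C, ∑ j ∈ C.filter (fun j => j < i), f i j
      = ∑ i ∈ C, ∑ j ∈ C.filter (fun j => i < j), f j i := by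
    rw [Finset.sum_comm' (t' := C) (s' := fun j => C.filter (fun i => j < i))]
    intro i j
    simp only [Finset.mem_filter]
    tauto
  calc ∑ i ∈ C, ∑ j ∈ C.erase i, f i j
      = ∑ i ∈ C, (∑ j ∈ C.filter (fun j => i < j), f i j
          + ∑ j ∈ C.filter (fun j => j < i), f i j) := by
        refine Finset.sum_congr rfl fun i _ => ?_
        rw [h1 i, Finset.sum_union (hdisj i)]
    _ = ∑ i ∈ C, ∑ j ∈ C.filter (fun j => i < j), (f i j + f j i) := by
        rw [Finset.sum_add_distrib, h2, ← Finset.sum_add_distrib]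
        simp [Finset.sum_add_distrib]

theorem cluster_exclusion_criterion
    (n d : ℕ) (m : Fin n → ℝ)
    (hm : ∀ i, 0 < m i)
    (Z : Set (Fin n → EuclideanSpace ℝ (Fin d)))
    (C : Finset (Fin n)) (hC : C.Nonempty)
    (UCZ ICZ FCZ : ℝ)
    (hU : ∀ p ∈ Z, UCZ ≤ ∑ i ∈ C, ∑ j ∈ C.filter (fun j => i < j),
      m i * m j / ‖p i - p j‖)
    (hI : ∀ p ∈ Z, ∑ i ∈ C, m i * ‖p i‖ ^ 2 ≤ ICZ)
    (hF : ∀ p ∈ Z, FCZ ≤ ∑ i ∈ C, ∑ k ∈ Cᶜ,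
      (m i * m k / ‖p i - p k‖ ^ 3) * (inner ℝ (p i - p k) (p i) : ℝ))
    (hFuniv : C = Finset.univ → FCZ = 0)
    (hlt : ICZ < UCZ + FCZ) :
    ∀ p ∈ Z, ¬ ((∀ i j, i ≠ j → p i ≠ p j) ∧
      ∀ i, p i = ∑ j ∈ Finset.univ \ {i},
        (m j / ‖p i - p j‖ ^ 3) • (p i - p j)) := by
  intro p hp
  rintro ⟨hne, hcen⟩
  set f : Fin n → Fin n → ℝ := fun i j =>
    (m i * m j / ‖p i - p j‖ ^ 3) * (inner ℝ (p i - p j) (p i) : ℝ) with hf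
  -- Step 1: m i * ‖p i‖² = ∑_{j≠i} f i j
  have step1 : ∀ i, m i * ‖p i‖ ^ 2 = ∑ j ∈ Finset.univ \ {i}, f i j := by
    intro i
    have : (‖p i‖ : ℝ) ^ 2 = inner ℝ (p i) (p i) := (real_inner_self_eq_norm_sq _).symm
    rw [this]
    conv_lhs => rw [show (inner ℝ (p i) (p i) : ℝ)
      = inner ℝ (p i) (∑ j ∈ Finset.univ \ {i},
        (m j / ‖p i - p j‖ ^ 3) • (p i - p j)) from by rw [← hcen i]]
    rw [inner_sum, Finset.mul_sum]
    refine Finset.sum_congr rfl fun j _ => ?_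
    rw [real_inner_smul_right, hf]
    simp only []
    rw [real_inner_comm (p i - p j) (p i)]
    ring
  -- Step 2: split into C-part and Cᶜ-part
  have hsplit : ∀ i ∈ C, (Finset.univ \ {i} : Finset (Fin n)) = C.erase i ∪ Cᶜ := by
    intro i hi
    ext j
    simp only [Finset.mem_sdiff, Finset.mem_univ, Finset.mem_singleton, true_and,
      Finset.mem_union, Finset.mem_erase, Finset.mem_compl]
    constructor
    · intro hj
      by_cases hjC : j ∈ C
      · exact Or.inl ⟨hj, hjC⟩
      · exact Or.inr hjC
    · rintro (⟨hj, _⟩ | hj)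
      · exact hj
      · intro h; exact hj (h ▸ hi)
  have hdisj2 : ∀ i ∈ C, Disjoint (C.erase i) (Cᶜ : Finset (Fin n)) := by
    intro i hi
    exact Disjoint.mono_left (Finset.erase_subset i C) disjoint_compl_right
  have step2 : ∑ i ∈ C, m i * ‖p i‖ ^ 2
      = (∑ i ∈ C, ∑ j ∈ C.erase i, f i j) + ∑ i ∈ C, ∑ k ∈ Cᶜ, f i k := by
    rw [← Finset.sum_add_distrib]
    refine Finset.sum_congr rfl fun i hi => ?_
    rw [step1 i, hsplit i hi, Finset.sum_union (hdisj2 i hi)]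
  -- Step 3: the C-part equals the potential sum
  have step3 : ∑ i ∈ C, ∑ j ∈ C.erase i, f i j
      = ∑ i ∈ C, ∑ j ∈ C.filter (fun j => i < j), m i * m j / ‖p i - p j‖ := by
    rw [sum_erase_symmetrize]
    refine Finset.sum_congr rfl fun i _ => Finset.sum_congr rfl fun j hj => ?_
    have hij : i ≠ j := (Finset.mem_filter.mp hj).2.ne
    have hpij : p i ≠ p j := hne i j hij
    have hr : ‖p i - p j‖ ≠ 0 := by
      simpa [sub_eq_zero] using hpij
    have hrev : ‖p j - p i‖ = ‖p i - p j‖ := norm_sub_rev _ _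
    have hinner : (inner ℝ (p i - p j) (p i) : ℝ) + inner ℝ (p j - p i) (p j)
        = ‖p i - p j‖ ^ 2 := by
      have h0 : p j - p i = -(p i - p j) := by abel
      rw [h0, inner_neg_left, ← sub_eq_add_neg, ← inner_sub_right,
        real_inner_self_eq_norm_sq]
    simp only [hf, hrev]
    set a : ℝ := inner ℝ (p i - p j) (p i) with ha
    set b : ℝ := inner ℝ (p j - p i) (p j) with hb
    set r := ‖p i - p j‖ with hrdef
    have h3 : r ^ 3 = r ^ 2 * r := by ring
    have h4 : m i * m j / r ^ 3 * a + m j * m i / r ^ 3 * b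
        = m i * m j * (a + b) / r ^ 3 := by ring
    rw [h4, hinner, h3]
    field_simp
  have hA := hU p hp
  have hB := hF p hp
  have hIC := hI p hp
  rw [step2, step3] at hIC
  linarith
end

section
/- Reduced system recovers full system: in the plane (d = 2), fix k ∈ {1,...,n−1} and suppose (q_1,...,q_n) satisfies: (a) m_i q_i = f_i for all i ∈ {1,...,n−1} with i ≠ k; (b) the x-component equation m_k x_k = f_{k,x}; (c) q_n = −(1/m_n) Σ_{i=1}^{n−1} m_i q_i. If moreover x_k ≠ x_n, then also m_k y_k = f_{k,y}, i.e. (q_1,...,q_n) is a normalized central configuration satisfying q_i = (1/m_i) f_i for all i = 1,...,n. -/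
theorem reduced_system_recovers_full_system
    (n : ℕ)
    (q : Fin (n + 1) → EuclideanSpace ℝ (Fin 2)) (m : Fin (n + 1) → ℝ)
    (f : Fin (n + 1) → EuclideanSpace ℝ (Fin 2))
    (hm : ∀ i, 0 < m i)
    (hq : ∀ i j, i ≠ j → q i ≠ q j)
    (hf : ∀ i, f i = ∑ j ∈ Finset.univ \ {i},
      ((m i * m j) / ‖q i - q j‖ ^ 3) • (q i - q j))
    (k : Fin (n + 1)) (hk : k ≠ Fin.last n)
    (ha : ∀ i, i ≠ k → i ≠ Fin.last n → m i • q i = f i)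
    (hb : m k * q k 0 = f k 0)
    (hc : q (Fin.last n) =
      (-(m (Fin.last n))⁻¹) • ∑ i ∈ Finset.univ \ {Fin.last n}, m i • q i)
    (hx : q k 0 ≠ q (Fin.last n) 0) :
    ∀ i, q i = (m i)⁻¹ • f i := by
  classical
  set N := Fin.last n with hN
  set c : Fin (n+1) → Fin (n+1) → ℝ := fun i j => (m i * m j) / ‖q i - q j‖ ^ 3 with hcdef
  set F : Fin (n+1) → Fin (n+1) → EuclideanSpace ℝ (Fin 2) :=
    fun i j => if j = i then 0 else c i j • (q i - q j) with hFdef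
  have hcsymm : ∀ i j, c i j = c j i := by
    intro i j
    simp [hcdef, norm_sub_rev (q i) (q j), mul_comm]
  have hFanti : ∀ i j, F i j = - F j i := by
    intro i j
    by_cases h : j = i
    · subst h; simp [hFdef]
    · simp only [hFdef, if_neg h, if_neg (Ne.symm h)]
      rw [hcsymm]
      rw [← smul_neg, neg_sub]
  have hfF : ∀ i, f i = ∑ j, F i j := by
    intro i
    rw [hf i]
    rw [← Finset.sum_erase Finset.univ (by simp [hFdef] : F i i = 0)]
    rw [Finset.erase_eq]
    refine Finset.sum_congr rfl fun j hj => ?_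
    simp only [Finset.mem_sdiff, Finset.mem_singleton] at hj
    simp [hFdef, hj.2, hcdef]
  -- total force is zero
  have hsumf : ∑ i, f i = 0 := by
    have h1 : ∑ i, f i = ∑ i, ∑ j, F i j := by
      exact Finset.sum_congr rfl fun i _ => hfF i
    have h2 : (∑ i, ∑ j, F i j) = - ∑ i, ∑ j, F i j := by
      nth_rewrite 1 [Finset.sum_comm]
      rw [← Finset.sum_neg_distrib]
      refine Finset.sum_congr rfl fun j _ => ?_
      rw [← Finset.sum_neg_distrib]
      exact Finset.sum_congr rfl fun i _ => hFanti i j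
    have h3 : (∑ i, ∑ j, F i j) = 0 := by
      have := add_eq_zero_iff_eq_neg.mpr h2
      have h4 : (2:ℝ) • (∑ i, ∑ j, F i j) = 0 := by
        rw [two_smul]; exact this
      simpa [smul_eq_zero] using h4
    rw [h1, h3]
  -- total wedge is zero
  set w : Fin (n+1) → Fin (n+1) → ℝ :=
    fun i j => if j = i then 0 else c i j * (q i 0 * q j 1 - q i 1 * q j 0) with hwdef
  have hwanti : ∀ i j, w i j = - w j i := by
    intro i j
    by_cases h : j = i
    · subst h; simp [hwdef]
    · simp only [hwdef, if_neg h, if_neg (Ne.symm h)]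
      rw [hcsymm]; ring
  have hWi : ∀ i, f i 0 * q i 1 - f i 1 * q i 0 = ∑ j, w i j := by
    intro i
    have h0 : f i 0 = ∑ j, F i j 0 := by
      rw [hfF i, WithLp.ofLp_sum]; exact Finset.sum_apply _ _ _
    have h1 : f i 1 = ∑ j, F i j 1 := by
      rw [hfF i, WithLp.ofLp_sum]; exact Finset.sum_apply _ _ _
    rw [h0, h1, Finset.sum_mul, Finset.sum_mul, ← Finset.sum_sub_distrib]
    refine Finset.sum_congr rfl fun j _ => ?_
    by_cases h : j = i
    · subst h; simp [hFdef, hwdef]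
    · simp only [hFdef, hwdef, if_neg h]
      simp only [PiLp.smul_apply, PiLp.sub_apply, smul_eq_mul]
      ring
  have hsumw : ∑ i, (f i 0 * q i 1 - f i 1 * q i 0) = 0 := by
    have h1 : ∑ i, (f i 0 * q i 1 - f i 1 * q i 0) = ∑ i, ∑ j, w i j :=
      Finset.sum_congr rfl fun i _ => hWi i
    have h2 : (∑ i, ∑ j, w i j) = - ∑ i, ∑ j, w i j := by
      nth_rewrite 1 [Finset.sum_comm]
      rw [← Finset.sum_neg_distrib]
      refine Finset.sum_congr rfl fun j _ => ?_
      rw [← Finset.sum_neg_distrib]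
      exact Finset.sum_congr rfl fun i _ => hwanti i j
    have h3 : (∑ i, ∑ j, w i j) = 0 := by linarith [h2]
    rw [h1, h3]
  -- total m • q is zero
  have htot : ∑ i, m i • q i = 0 := by
    have hmem : N ∈ (Finset.univ : Finset (Fin (n+1))) := Finset.mem_univ _
    rw [← Finset.sum_erase_add _ _ hmem, Finset.erase_eq]
    have : m N • q N = - ∑ i ∈ Finset.univ \ {N}, m i • q i := by
      rw [hc]
      rw [smul_smul]
      rw [mul_neg, mul_inv_cancel₀ (hm N).ne']
      simp
    rw [this]; simp
  -- sum of residuals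
  set u : EuclideanSpace ℝ (Fin 2) := f k - m k • q k with hu
  set v : EuclideanSpace ℝ (Fin 2) := f N - m N • q N with hv
  have hres : ∑ i, (f i - m i • q i) = 0 := by
    rw [Finset.sum_sub_distrib, hsumf, htot, sub_zero]
  have huv : u + v = 0 := by
    have hsub : ∑ i, (f i - m i • q i) = ∑ i ∈ ({k, N} : Finset (Fin (n+1))), (f i - m i • q i) := by
      symm
      refine Finset.sum_subset (Finset.subset_univ _) ?_
      intro i _ hi
      simp only [Finset.mem_insert, Finset.mem_singleton, not_or] at hi
      rw [ha i hi.1 hi.2, sub_self]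
    rw [hsub, Finset.sum_pair hk] at hres
    exact hres
  have hvu : v = -u := eq_neg_of_add_eq_zero_right huv
  -- component facts
  have hu0 : u 0 = 0 := by
    simp only [hu, PiLp.sub_apply, PiLp.smul_apply, smul_eq_mul]
    rw [hb]; ring
  have hfk0 : f k 0 = u 0 + m k * q k 0 := by
    simp [hu, PiLp.sub_apply, PiLp.smul_apply]
  have hfk1 : f k 1 = u 1 + m k * q k 1 := by
    simp [hu, PiLp.sub_apply, PiLp.smul_apply]
  have hfN0 : f N 0 = v 0 + m N * q N 0 := by
    simp [hv, PiLp.sub_apply, PiLp.smul_apply]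
  have hfN1 : f N 1 = v 1 + m N * q N 1 := by
    simp [hv, PiLp.sub_apply, PiLp.smul_apply]
  have hwsum : (f k 0 * q k 1 - f k 1 * q k 0) + (f N 0 * q N 1 - f N 1 * q N 0) = 0 := by
    have hsub : ∑ i, (f i 0 * q i 1 - f i 1 * q i 0)
        = ∑ i ∈ ({k, N} : Finset (Fin (n+1))), (f i 0 * q i 1 - f i 1 * q i 0) := by
      symm
      refine Finset.sum_subset (Finset.subset_univ _) ?_
      intro i _ hi
      simp only [Finset.mem_insert, Finset.mem_singleton, not_or] at hi
      rw [← ha i hi.1 hi.2]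
      simp only [PiLp.smul_apply, smul_eq_mul]
      ring
    rw [hsub, Finset.sum_pair hk] at hsumw
    exact hsumw
  have hv0 : v 0 = 0 := by rw [hvu]; simp [hu0]
  have hv1 : v 1 = - u 1 := by rw [hvu]; simp
  have hu1 : u 1 = 0 := by
    rw [hfk0, hfk1, hfN0, hfN1, hu0, hv0, hv1] at hwsum
    have hx' : q k 0 - q N 0 ≠ 0 := sub_ne_zero_of_ne hx
    have : u 1 * (q k 0 - q N 0) = 0 := by ring_nf; ring_nf at hwsum; linarith
    rcases mul_eq_zero.mp this with h | h
    · exact h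
    · exact absurd h hx'
  have huz : u = 0 := by
    ext x
    fin_cases x
    · simpa using hu0
    · simpa using hu1
  have hfk : f k = m k • q k := by
    have := hu ▸ huz
    rwa [sub_eq_zero] at this
  have hfN : f N = m N • q N := by
    have : v = 0 := by rw [hvu, huz, neg_zero]
    rw [hv] at this
    rwa [sub_eq_zero] at this
  intro i
  by_cases hik : i = k
  · rw [hik, hfk, inv_smul_smul₀ (hm k).ne']
  · by_cases hiN : i = N
    · rw [hiN, hfN, inv_smul_smul₀ (hm N).ne']
    · rw [← ha i hik hiN, inv_smul_smul₀ (hm i).ne']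
end
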